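/- arXiv:2012.12190 — 9 statements merged into one kernel-verified Lean document; each statement's English description precedes it below -/
import Mathlib

section
/- Let G be a finite connected simple graph with two distinguished vertices m1 ≠ m2 (the monitors). Let e = {r,s} ∈ E(G) be a bridge of G (i.e., G − e is disconnected) with {r,s} ≠ {m1,m2}, such that m1 and m2 lie in different connected components of G − e. Then e is unidentifiable, and moreover every edge of G that shares an endpoint with e is unidentifiable. -/
open SimpleGraph

/-- The total weight of a walk: the sum of the weights of its edges. -/
def walkWeight {V : Type*} (G : SimpleGraph V) {u v : V} (w : Sym2 V → ℝ) (p : G.Walk u v) : ℝ :=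
  (p.edges.map w).sum

/-- An edge is identifiable if any two weight functions agreeing on the total weight of
every simple path between the monitors m1 and m2 agree on that edge. -/
def Identifiable {V : Type*} (G : SimpleGraph V) (m1 m2 : V) (e : Sym2 V) : Prop :=
  ∀ w w' : Sym2 V → ℝ,
    (∀ p : G.Walk m1 m2, p.IsPath → walkWeight G w p = walkWeight G w' p) →
    w e = w' e

/-- k-vertex-connectivity: more than k vertices, and still connected after deleting
any set of fewer than k vertices. -/
def KVertexConnected {V : Type*} [Fintype V] [DecidableEq V] (G : SimpleGraph V) (k : ℕ) : Prop :=
  k < Fintype.card V ∧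
  ∀ S : Finset V, S.card < k → (G.induce (↑(Sᶜ) : Set V)).Connected

/-- k-edge-connectivity: at least two vertices, and still connected after deleting
any set of fewer than k edges. -/
def KEdgeConnected {V : Type*} [Fintype V] (G : SimpleGraph V) (k : ℕ) : Prop :=
  2 ≤ Fintype.card V ∧
  ∀ F : Finset (Sym2 V), F.card < k → (G.deleteEdges ↑F).Connected

/-- The extended graph: add two virtual monitors (`Sum.inr false` and `Sum.inr true`),
each adjacent to every monitor in M, with no edge joining the two virtual monitors. -/
def extendedGraph {V : Type*} (G : SimpleGraph V) (M : Set V) : SimpleGraph (V ⊕ Bool) :=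
  SimpleGraph.fromRel (fun a b =>
    match a, b with
    | Sum.inl u, Sum.inl v => G.Adj u v
    | Sum.inl u, Sum.inr _ => u ∈ M
    | Sum.inr _, Sum.inl v => v ∈ M
    | Sum.inr _, Sum.inr _ => False)

private lemma sum_map_ite' {α : Type*} [DecidableEq α] (l : List α) (a : α) (c : ℝ) :
    (l.map fun x => if x = a then c else 0).sum = c * (l.count a : ℝ) := by
  induction l with
  | nil => simp
  | cons x xs ih =>
    by_cases h : x = a <;> simp [h, ih, List.count_cons] <;> ring

private lemma sum_map_add' {α : Type*} (l : List α) (f g : α → ℝ) :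
    (l.map fun x => f x + g x).sum = (l.map f).sum + (l.map g).sum := by
  induction l with
  | nil => simp
  | cons x xs ih => simp [ih]; ring

private lemma walkWeight_add' {V : Type*} {G : SimpleGraph V} {u v : V}
    (w1 w2 : Sym2 V → ℝ) (p : G.Walk u v) :
    walkWeight G (fun f => w1 f + w2 f) p = walkWeight G w1 p + walkWeight G w2 p :=
  sum_map_add' _ _ _

private lemma walkWeight_ite' {V : Type*} [DecidableEq V] {G : SimpleGraph V} {u v : V}
    (p : G.Walk u v) (e0 : Sym2 V) (c : ℝ) :
    walkWeight G (fun f => if f = e0 then c else 0) p = c * (p.edges.count e0 : ℝ) :=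
  sum_map_ite' _ _ _

private def phiSym {V : Type*} (φ : V → ℝ) : Sym2 V → ℝ :=
  Sym2.lift ⟨fun x y => φ x + φ y, fun x y => by ring⟩

private lemma walkWeight_phi' {V : Type*} {G : SimpleGraph V} {u v : V}
    (φ : V → ℝ) (p : G.Walk u v) :
    walkWeight G (phiSym φ) p = 2 * (p.support.map φ).sum - φ u - φ v := by
  induction p with
  | nil => simp [walkWeight]; ring
  | @cons a x c h q ih =>
    simp only [walkWeight, Walk.edges_cons, List.map_cons, List.sum_cons] at *
    rw [ih, Walk.support_cons]
    simp [phiSym]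
    ring

private def phiab {V : Type*} [DecidableEq V] (r s : V) (a b : ℝ) : V → ℝ :=
  fun x => (if x = r then a else 0) + (if x = s then b else 0)

private def Wdef {V : Type*} [DecidableEq V] (r s : V) (a b c : ℝ) : Sym2 V → ℝ :=
  fun f => (if f = s(r, s) then c else 0) + phiSym (phiab r s a b) f

/-- If e = {r,s} is a bridge of a finite connected graph G, with
{r,s} ≠ {m1,m2} and with the monitors m1, m2 in different connected components of
G − e, then e and every edge sharing an endpoint with e are unidentifiable. -/
theorem bridge_and_adjacent_unidentifiable {V : Type*} [Fintype V] [DecidableEq V]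
    (G : SimpleGraph V) (hG : G.Connected) (m1 m2 : V) (hm : m1 ≠ m2)
    (r s : V) (he : G.Adj r s)
    (hbridge : ¬ (G.deleteEdges {s(r, s)}).Connected)
    (hne : s(r, s) ≠ s(m1, m2))
    (hsep : ¬ (G.deleteEdges {s(r, s)}).Reachable m1 m2) :
    ¬ Identifiable G m1 m2 s(r, s) ∧
    ∀ e ∈ G.edgeSet, (∃ x, x ∈ e ∧ (x = r ∨ x = s)) → ¬ Identifiable G m1 m2 e := by
  have hrs : r ≠ s := he.ne
  -- every m1-m2 path uses the bridge edge
  have hmem : ∀ p : G.Walk m1 m2, p.IsPath → s(r, s) ∈ p.edges := by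
    intro p hp
    by_contra hmem
    exact hsep ⟨p.toDeleteEdge _ hmem⟩
  have hcount : ∀ p : G.Walk m1 m2, p.IsPath → p.edges.count s(r, s) = 1 :=
    fun p hp => hp.isTrail.count_edges_eq_one (hmem p hp)
  -- support sum of phiab over a path
  have hsum : ∀ (a b : ℝ) (p : G.Walk m1 m2), p.IsPath →
      (p.support.map (phiab r s a b)).sum = a + b := by
    intro a b p hp
    have h1 : r ∈ p.support := Walk.fst_mem_support_of_mem_edges p (hmem p hp)
    have h2 : s ∈ p.support := Walk.snd_mem_support_of_mem_edges p (hmem p hp)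
    have c1 : p.support.count r = 1 := List.count_eq_one_of_mem hp.support_nodup h1
    have c2 : p.support.count s = 1 := List.count_eq_one_of_mem hp.support_nodup h2
    have : (p.support.map (phiab r s a b)).sum
        = (p.support.map fun x => if x = r then a else 0).sum
          + (p.support.map fun x => if x = s then b else 0).sum := sum_map_add' _ _ _
    rw [this, sum_map_ite', sum_map_ite', c1, c2]
    push_cast
    ring
  have hWw : ∀ (a b c : ℝ) (p : G.Walk m1 m2), p.IsPath →
      walkWeight G (Wdef r s a b c) p
        = c + 2 * (a + b) - phiab r s a b m1 - phiab r s a b m2 := by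
    intro a b c p hp
    have : walkWeight G (Wdef r s a b c) p
        = walkWeight G (fun f => if f = s(r, s) then c else 0) p
          + walkWeight G (phiSym (phiab r s a b)) p := walkWeight_add' _ _ _
    rw [this, walkWeight_ite', walkWeight_phi', hcount p hp, hsum a b p hp]
    push_cast
    ring
  have master : ∀ (a b : ℝ) (t : Sym2 V),
      Wdef r s a b (phiab r s a b m1 + phiab r s a b m2 - 2 * (a + b)) t ≠ 0 →
      ¬ Identifiable G m1 m2 t := by
    intro a b t hnz hid
    have h0 := hid (fun _ => 0)
      (Wdef r s a b (phiab r s a b m1 + phiab r s a b m2 - 2 * (a + b)))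
      (fun p hp => by
        rw [hWw _ _ _ p hp]
        simp [walkWeight])
    exact hnz h0.symm
  -- Part 1: the bridge itself
  have main1 : ¬ Identifiable G m1 m2 s(r, s) := by
    by_cases hr : m1 = r ∨ m2 = r
    · -- then no monitor equals s
      have h1s : m1 ≠ s := by
        rintro rfl
        rcases hr with h | h
        · exact hrs h.symm
        · exact hne (by rw [h]; exact Sym2.eq_swap)
      have h2s : m2 ≠ s := by
        rintro rfl
        rcases hr with h | h
        · exact hne (by rw [h])
        · exact hrs h.symm
      refine master 0 (-1) s(r, s) ?_
      simp [Wdef, phiab, phiSym, h1s, h2s, hrs]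
      norm_num
    · push_neg at hr
      obtain ⟨h1r, h2r⟩ := hr
      refine master (-1) 0 s(r, s) ?_
      simp [Wdef, phiab, phiSym, h1r, h2r, hrs, hrs.symm]
      norm_num
  refine ⟨main1, ?_⟩
  -- Part 2: edges sharing an endpoint with the bridge
  rintro e heE ⟨x, hxe, hxrs⟩
  obtain ⟨y, rfl⟩ := Sym2.mem_iff_exists.mp hxe
  have hadj : G.Adj x y := heE
  have hxy : x ≠ y := hadj.ne
  rcases hxrs with rfl | rfl
  · -- e = s(x, y) with x the endpoint r of the bridge
    by_cases hys : y = s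
    · subst hys; exact main1
    · refine master 1 0 s(x, y) ?_
      have hcond : s(x, y) ≠ s(x, s) := by
        simp [Sym2.eq_iff, hys, hrs]
      simp [Wdef, phiab, phiSym, hcond, hxy.symm, hys]
  · -- e = s(x, y) with x the endpoint s of the bridge
    by_cases hyr : y = r
    · subst hyr
      rw [Sym2.eq_swap]
      exact main1
    · refine master 0 1 s(x, y) ?_
      have hcond : s(x, y) ≠ s(r, x) := by
        simp [Sym2.eq_iff, hyr, hrs.symm, hxy]
      simp [Wdef, phiab, phiSym, hcond, hxy.symm, hrs.symm, hyr]
end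

section
/- Let G be a finite connected simple graph with at least 4 vertices and two distinguished vertices m1 ≠ m2 (the monitors) with m1m2 ∉ E(G), and suppose the interior graph H = G − m1 − m2 is nonempty and connected. If every interior link of G (every edge with neither endpoint a monitor) is identifiable, then the graph G + m1m2 obtained by adding the edge m1m2 is 3-vertex-connected. -/
open SimpleGraph

section AuxSection
open SimpleGraph Walk



namespace IdAux

variable {V : Type*} {G : SimpleGraph V}

lemma mem_support_of_edge {u v z : V} (p : G.Walk u v) {e : Sym2 V}
    (he : e ∈ p.edges) (hz : z ∈ e) : z ∈ p.support := by
  induction e using Sym2.ind with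
  | _ a b =>
    rcases Sym2.mem_iff.mp hz with rfl | rfl
    · exact p.fst_mem_support_of_mem_edges he
    · exact p.snd_mem_support_of_mem_edges he

/-- The perturbation weight: +1 on edges between `x` and `A`, −1 on edges between `y` and `A`. -/
noncomputable def pert (A : Set V) (x y : V) (e : Sym2 V) : ℝ :=
  ({e' : Sym2 V | ∃ a ∈ A, e' = s(x, a)}.indicator (fun _ => (1:ℝ)) e) -
    ({e' : Sym2 V | ∃ a ∈ A, e' = s(y, a)}.indicator (fun _ => (1:ℝ)) e)

lemma pert_swap (A : Set V) (x y : V) (e : Sym2 V) : pert A y x e = - pert A x y e := by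
  unfold pert; ring

lemma pert_eq_one {A : Set V} {x y : V} (hxy : x ≠ y) (hxA : x ∉ A) {a : V} (ha : a ∈ A) :
    pert A x y s(x, a) = 1 := by
  unfold pert
  rw [Set.indicator_of_mem (by exact ⟨a, ha, rfl⟩),
    Set.indicator_of_notMem (by
      rintro ⟨a', ha', h⟩
      rw [Sym2.eq_iff] at h
      rcases h with ⟨h1, -⟩ | ⟨h1, -⟩
      · exact hxy h1
      · exact hxA (h1 ▸ ha'))]
  norm_num

lemma pert_eq_neg_one {A : Set V} {x y : V} (hxy : x ≠ y) (hyA : y ∉ A) {a : V} (ha : a ∈ A) :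
    pert A x y s(y, a) = -1 := by
  have := pert_eq_one (A := A) hxy.symm hyA ha
  rw [pert_swap] at this
  linarith

lemma pert_eq_zero_of_A {A : Set V} {x y : V} {e : Sym2 V} (h : ∀ z ∈ e, z ∉ A) :
    pert A x y e = 0 := by
  unfold pert
  rw [Set.indicator_of_notMem (by rintro ⟨a, ha, rfl⟩; exact h a (by simp) ha),
    Set.indicator_of_notMem (by rintro ⟨a, ha, rfl⟩; exact h a (by simp) ha)]
  norm_num

lemma pert_eq_zero_of_xy {A : Set V} {x y : V} {e : Sym2 V} (hx : x ∉ e) (hy : y ∉ e) :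
    pert A x y e = 0 := by
  unfold pert
  rw [Set.indicator_of_notMem (by rintro ⟨a, ha, rfl⟩; exact hx (by simp)),
    Set.indicator_of_notMem (by rintro ⟨a, ha, rfl⟩; exact hy (by simp))]
  norm_num

lemma sum_map_pert_swap (A : Set V) (x y : V) (l : List (Sym2 V)) :
    (l.map (pert A y x)).sum = -((l.map (pert A x y)).sum) := by
  induction l with
  | nil => simp
  | cons e t ih =>
    simp only [List.map_cons, List.sum_cons]
    rw [pert_swap, ih]; ring

lemma eq_of_mem_take_drop [DecidableEq V] {u v z w : V} (p : G.Walk u v) (hp : p.IsPath) (hz : z ∈ p.support)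
    (h1 : w ∈ (p.takeUntil z hz).support) (h2 : w ∈ (p.dropUntil z hz).support) : w = z := by
  have hs := congrArg Walk.support (p.take_spec hz)
  rw [support_append] at hs
  have hnd : ((p.takeUntil z hz).support ++ (p.dropUntil z hz).support.tail).Nodup := by
    rw [hs]; exact hp.support_nodup
  by_contra hne
  have h2' : w ∈ (p.dropUntil z hz).support.tail := by
    have hc := (p.dropUntil z hz).support_eq_cons
    rw [hc] at h2
    rcases List.mem_cons.mp h2 with h | h
    · exact absurd h hne
    · exact h
  exact (List.nodup_append'.mp hnd).2.2 h1 h2'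



variable {V : Type*} {G : SimpleGraph V}

section Aux2
variable [DecidableEq V]

lemma not_A_after_exit {A : Set V} {x y : V} (hyA : y ∉ A)
    (hbd : ∀ a ∈ A, ∀ v, G.Adj a v → v ∈ A ∨ v = x ∨ v = y)
    {v : V} (p : G.Walk y v) (hp : p.IsPath) (hv : v ∉ A) (hx : x ∉ p.support) :
    ∀ z ∈ p.support, z ∉ A := by
  intro z hz hzA
  obtain ⟨d, hd, hdA, hdA'⟩ := (p.dropUntil z hz).exists_boundary_dart A hzA hv
  have hsnd : d.snd ∈ (p.dropUntil z hz).support :=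
    (p.dropUntil z hz).dart_snd_mem_support_of_mem_darts hd
  rcases hbd d.fst hdA d.snd d.adj with h | h | h
  · exact hdA' h
  · exact hx (p.support_dropUntil_subset hz (h ▸ hsnd))
  · have hy1 : y ∈ (p.takeUntil z hz).support := (p.takeUntil z hz).start_mem_support
    have hyz := eq_of_mem_take_drop p hp hz hy1 (h ▸ hsnd)
    rw [← hyz] at hzA
    exact hyA hzA

lemma sum_pert_exit {A : Set V} {x y : V} (hxy : x ≠ y) (hxA : x ∉ A) (hyA : y ∉ A)
    (hbd : ∀ a ∈ A, ∀ v, G.Adj a v → v ∈ A ∨ v = x ∨ v = y) :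
    ∀ {u v : V} (p : G.Walk u v), p.IsPath → u ∈ A → v ∉ A → x ∉ p.support →
      (p.edges.map (pert A x y)).sum = -1 := by
  intro u v p
  induction p with
  | nil => intro _ hu hv _; exact absurd hu hv
  | @cons u u' v h q ih =>
    intro hp hu hv hx
    have hxq : x ∉ q.support := fun hh => hx (by simp [support_cons, hh])
    rw [edges_cons, List.map_cons, List.sum_cons]
    by_cases hu' : u' ∈ A
    · have h0 : pert A x y s(u, u') = 0 := by
        apply pert_eq_zero_of_xy
        · intro hxe
          rcases Sym2.mem_iff.mp hxe with rfl | rfl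
          · exact hxA hu
          · exact hxA hu'
        · intro hye
          rcases Sym2.mem_iff.mp hye with rfl | rfl
          · exact hyA hu
          · exact hyA hu'
      rw [h0, ih hp.of_cons hu' hv hxq]
      ring
    · rcases hbd u hu u' h with h' | h' | h'
      · exact absurd h' hu'
      · exact absurd (h' ▸ q.start_mem_support) hxq
      · obtain rfl := h'.symm
        have h0 : pert A x y s(u, y) = -1 := by
          rw [Sym2.eq_swap]; exact pert_eq_neg_one hxy hyA hu
        have h1 : (q.edges.map (pert A x y)).sum = 0 := by
          apply List.sum_eq_zero
          intro r hr
          obtain ⟨e, he, rfl⟩ := List.mem_map.mp hr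
          apply pert_eq_zero_of_A
          intro z hze
          exact not_A_after_exit hyA hbd q hp.of_cons hv hxq z
            (mem_support_of_edge q he hze)
        rw [h0, h1]
        ring

lemma sum_pert_main {A : Set V} {x y : V} (hxy : x ≠ y) (hxA : x ∉ A) (hyA : y ∉ A)
    (hbd : ∀ a ∈ A, ∀ v, G.Adj a v → v ∈ A ∨ v = x ∨ v = y) :
    ∀ {u v : V} (p : G.Walk u v), p.IsPath → u ∉ A → v ∉ A →
      (p.edges.map (pert A x y)).sum = 0 := by
  intro u v p
  induction p with
  | nil => intro _ _ _; simp
  | @cons u u' v h q ih =>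
    intro hp hu hv
    have huq : u ∉ q.support := (cons_isPath_iff h q).mp hp |>.2
    rw [edges_cons, List.map_cons, List.sum_cons]
    by_cases hu' : u' ∈ A
    · rcases hbd u' hu' u h.symm with h' | h' | h'
      · exact absurd h' hu
      · obtain rfl := h'.symm
        rw [pert_eq_one hxy hxA hu',
          sum_pert_exit hxy hxA hyA hbd q hp.of_cons hu' hv huq]
        ring
      · obtain rfl := h'.symm
        have h1 : (q.edges.map (pert A y x)).sum = -1 := by
          refine sum_pert_exit hxy.symm hyA hxA ?_ q hp.of_cons hu' hv huq
          intro a ha w hw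
          rcases hbd a ha w hw with h'' | h'' | h''
          · exact Or.inl h''
          · exact Or.inr (Or.inr h'')
          · exact Or.inr (Or.inl h'')
        rw [sum_map_pert_swap] at h1
        rw [pert_eq_neg_one hxy hyA hu']
        linarith
    · have h0 : pert A x y s(u, u') = 0 := by
        apply pert_eq_zero_of_A
        intro z hze
        rcases Sym2.mem_iff.mp hze with rfl | rfl
        · exact hu
        · exact hu'
      rw [h0, ih hp.of_cons hu' hv]
      ring

lemma no_touch {A : Set V} {x : V} (hxA : x ∉ A)
    (hbd : ∀ a ∈ A, ∀ v, G.Adj a v → v ∈ A ∨ v = x)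
    {u v : V} (p : G.Walk u v) (hp : p.IsPath) (hu : u ∉ A) (hv : v ∉ A) :
    ∀ z ∈ p.support, z ∉ A := by
  intro z hz hzA
  obtain ⟨d, hd, hdA, hdA'⟩ := (p.dropUntil z hz).exists_boundary_dart A hzA hv
  have hx2 : x ∈ (p.dropUntil z hz).support := by
    rcases hbd d.fst hdA d.snd d.adj with h | h
    · exact absurd h hdA'
    · exact h ▸ (p.dropUntil z hz).dart_snd_mem_support_of_mem_darts hd
  obtain ⟨d', hd', hA1, hA1'⟩ := (p.takeUntil z hz).reverse.exists_boundary_dart A hzA hu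
  have hx1 : x ∈ (p.takeUntil z hz).support := by
    rcases hbd d'.fst hA1 d'.snd d'.adj with h | h
    · exact absurd h hA1'
    · have := (p.takeUntil z hz).reverse.dart_snd_mem_support_of_mem_darts hd'
      rw [support_reverse, List.mem_reverse] at this
      exact h ▸ this
  have hxz := eq_of_mem_take_drop p hp hz hx1 hx2
  rw [← hxz] at hzA
  exact hxA hzA

end Aux2

end IdAux

lemma induce_connected_transfer {V : Type*} {G1 G2 : SimpleGraph V} {s t : Set V}
    (hst : t = s) (hadj : ∀ a b, a ∈ s → b ∈ s → (G1.Adj a b ↔ G2.Adj a b))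
    (h : (G1.induce s).Connected) : (G2.induce t).Connected := by
  subst hst
  have iso : G1.induce t ≃g G2.induce t :=
    ⟨Equiv.refl _, by
      intro a b
      simp only [Equiv.refl_apply, comap_adj, Function.Embedding.coe_subtype]
      exact (hadj a b a.2 b.2).symm⟩
  rw [connected_iff] at h ⊢
  exact ⟨(iso.preconnected_iff).mp h.1, h.2⟩

lemma two_boundary {V : Type*} [DecidableEq V] {G : SimpleGraph V} {m1 m2 : V}
    (hid : ∀ e ∈ G.edgeSet, (∀ x ∈ e, x ≠ m1 ∧ x ≠ m2) → Identifiable G m1 m2 e)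
    {A : Set V} (hAm1 : m1 ∉ A) (hAm2 : m2 ∉ A)
    {x y : V} (hxy : x ≠ y) (hxA : x ∉ A) (hyA : y ∉ A)
    (hbd : ∀ a ∈ A, ∀ v, G.Adj a v → v ∈ A ∨ v = x ∨ v = y)
    (hyint : y ≠ m1 ∧ y ≠ m2) {a : V} (ha : a ∈ A) (hadj : G.Adj a y) : False := by
  have he : s(y, a) ∈ G.edgeSet := by rw [SimpleGraph.mem_edgeSet]; exact hadj.symm
  have hint : ∀ z ∈ s(y, a), z ≠ m1 ∧ z ≠ m2 := by
    intro z hz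
    rcases Sym2.mem_iff.mp hz with rfl | rfl
    · exact hyint
    · exact ⟨fun h => hAm1 (h ▸ ha), fun h => hAm2 (h ▸ ha)⟩
  have key := hid _ he hint (fun _ => 0) (IdAux.pert A x y) ?_
  · rw [IdAux.pert_eq_neg_one hxy hyA ha] at key
    norm_num at key
  · intro p hp
    show (p.edges.map (fun _ => (0:ℝ))).sum = (p.edges.map (IdAux.pert A x y)).sum
    rw [IdAux.sum_pert_main hxy hxA hyA hbd p hp hAm1 hAm2]
    simp

lemma one_boundary {V : Type*} [Fintype V] [DecidableEq V] {G : SimpleGraph V}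
    (hG : G.Connected) (hcard : 4 ≤ Fintype.card V) {m1 m2 : V} (hm : m1 ≠ m2)
    (hnadj : ¬ G.Adj m1 m2)
    (hH : (G.induce {v | v ≠ m1 ∧ v ≠ m2}).Connected)
    (hid : ∀ e ∈ G.edgeSet, (∀ x ∈ e, x ≠ m1 ∧ x ≠ m2) → Identifiable G m1 m2 e)
    {A : Set V} (hAne : A.Nonempty) (hAm1 : m1 ∉ A) (hAm2 : m2 ∉ A)
    {x : V} (hxA : x ∉ A)
    (hbd : ∀ a ∈ A, ∀ v, G.Adj a v → v ∈ A ∨ v = x) : False := by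
  classical
  have hnbr : ∀ m : V, ∃ z, G.Adj m z := by
    intro m
    obtain ⟨z, hzne⟩ := Fintype.exists_ne_of_one_lt_card (by omega) m
    obtain ⟨p⟩ := hG.preconnected m z
    cases p with
    | nil => exact absurd rfl hzne
    | cons h q => exact ⟨_, h⟩
  by_cases hxm : x = m1 ∨ x = m2
  · have hIA : ∀ t, t ≠ m1 → t ≠ m2 → t ∈ A := by
      by_contra hc
      push_neg at hc
      obtain ⟨t, ht1, ht2, htA⟩ := hc
      obtain ⟨a0, ha0⟩ := hAne
      have ha0I : a0 ∈ {v | v ≠ m1 ∧ v ≠ m2} :=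
        ⟨fun h => hAm1 (h ▸ ha0), fun h => hAm2 (h ▸ ha0)⟩
      obtain ⟨p⟩ := hH.preconnected ⟨a0, ha0I⟩ ⟨t, ⟨ht1, ht2⟩⟩
      obtain ⟨d, hd, h1, h2⟩ := p.exists_boundary_dart (Subtype.val ⁻¹' A)
        (by exact ha0) (by exact htA)
      have hadj : G.Adj ↑d.fst ↑d.snd := d.adj
      rcases hbd ↑d.fst h1 ↑d.snd hadj with h | h
      · exact h2 h
      · rcases hxm with rfl | rfl
        · exact d.snd.2.1 h
        · exact d.snd.2.2 h
    rcases hxm with rfl | rfl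
    · obtain ⟨z, hz⟩ := hnbr m2
      have hzx : z ≠ x := fun h => hnadj (h ▸ hz).symm
      have hzA : z ∈ A := hIA z hzx hz.ne'
      rcases hbd z hzA m2 hz.symm with h | h
      · exact hAm2 h
      · exact hm h.symm
    · obtain ⟨z, hz⟩ := hnbr m1
      have hzx : z ≠ x := fun h => hnadj (h ▸ hz)
      have hzA : z ∈ A := hIA z hz.ne' hzx
      rcases hbd z hzA m1 hz.symm with h | h
      · exact hAm1 h
      · exact hm h
  · push_neg at hxm
    by_cases hact : ∃ a ∈ A, G.Adj a x
    · obtain ⟨a, ha, hadj⟩ := hact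
      have he : s(x, a) ∈ G.edgeSet := by rw [SimpleGraph.mem_edgeSet]; exact hadj.symm
      have hint : ∀ z ∈ s(x, a), z ≠ m1 ∧ z ≠ m2 := by
        intro z hz
        rcases Sym2.mem_iff.mp hz with rfl | rfl
        · exact hxm
        · exact ⟨fun h => hAm1 (h ▸ ha), fun h => hAm2 (h ▸ ha)⟩
      have key := hid _ he hint (fun _ => 0)
        (fun e => if e = s(x, a) then (1:ℝ) else 0) ?_
      · norm_num at key
      · intro p hp
        have h2 : (p.edges.map (fun e => if e = s(x, a) then (1:ℝ) else 0)).sum = 0 := by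
          apply List.sum_eq_zero
          intro r hr
          obtain ⟨e, he', rfl⟩ := List.mem_map.mp hr
          have : e ≠ s(x, a) := by
            rintro rfl
            exact IdAux.no_touch hxA hbd p hp hAm1 hAm2 a
              (IdAux.mem_support_of_edge p he' (by simp)) ha
          simp [this]
        show (p.edges.map (fun _ => (0:ℝ))).sum =
          (p.edges.map (fun e => if e = s(x, a) then (1:ℝ) else 0)).sum
        rw [h2]
        simp
    · obtain ⟨a0, ha0⟩ := hAne
      obtain ⟨p⟩ := hG.preconnected a0 m1
      obtain ⟨d, hd, h1, h2⟩ := p.exists_boundary_dart A ha0 hAm1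
      rcases hbd d.fst h1 d.snd d.adj with h | h
      · exact h2 h
      · exact hact ⟨d.fst, h1, h ▸ d.adj⟩

lemma main_from_A {V : Type*} [Fintype V] [DecidableEq V] (G : SimpleGraph V)
    (hG : G.Connected) (hcard : 4 ≤ Fintype.card V) (m1 m2 : V) (hm : m1 ≠ m2)
    (hnadj : ¬ G.Adj m1 m2) (hH : (G.induce {v | v ≠ m1 ∧ v ≠ m2}).Connected)
    (hid : ∀ e ∈ G.edgeSet, (∀ x ∈ e, x ≠ m1 ∧ x ≠ m2) → Identifiable G m1 m2 e)
    (A : Set V) (hAne : A.Nonempty) (hAm1 : m1 ∉ A) (hAm2 : m2 ∉ A)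
    (x y : V) (hxA : x ∉ A) (hyA : y ∉ A)
    (hmon : x ≠ y → ¬((x = m1 ∨ x = m2) ∧ (y = m1 ∨ y = m2)))
    (hbd : ∀ a ∈ A, ∀ v, G.Adj a v → v ∈ A ∨ v = x ∨ v = y) : False := by
  classical
  by_cases hxy : x = y
  · subst hxy
    exact one_boundary hG hcard hm hnadj hH hid hAne hAm1 hAm2 hxA
      (fun a ha v hv => (hbd a ha v hv).elim Or.inl (fun h => Or.inr (h.elim id id)))
  · by_cases hy_act : ∃ a ∈ A, G.Adj a y
    · by_cases hyint : y = m1 ∨ y = m2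
      · by_cases hx_act : ∃ a ∈ A, G.Adj a x
        · have hxint : x ≠ m1 ∧ x ≠ m2 := by
            by_contra hc
            push_neg at hc
            rcases Classical.em (x = m1) with h | h
            · exact hmon hxy ⟨Or.inl h, hyint⟩
            · exact hmon hxy ⟨Or.inr (hc h), hyint⟩
          obtain ⟨a, ha, hadj⟩ := hx_act
          refine two_boundary hid hAm1 hAm2 (Ne.symm hxy) hyA hxA ?_ hxint ha hadj
          intro a' ha' v hv
          rcases hbd a' ha' v hv with h | h | h
          · exact Or.inl h
          · exact Or.inr (Or.inr h)
          · exact Or.inr (Or.inl h)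
        · refine one_boundary hG hcard hm hnadj hH hid hAne hAm1 hAm2 hyA ?_
          intro a ha v hv
          rcases hbd a ha v hv with h | h | h
          · exact Or.inl h
          · exact absurd ⟨a, ha, h ▸ hv⟩ hx_act
          · exact Or.inr h
      · push_neg at hyint
        obtain ⟨a, ha, hadj⟩ := hy_act
        exact two_boundary hid hAm1 hAm2 hxy hxA hyA hbd hyint ha hadj
    · refine one_boundary hG hcard hm hnadj hH hid hAne hAm1 hAm2 hxA ?_
      intro a ha v hv
      rcases hbd a ha v hv with h | h | h
      · exact Or.inl h
      · exact Or.inr h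
      · exact absurd ⟨a, ha, h ▸ hv⟩ hy_act

end AuxSection

/-- If G is finite, connected, with ≥ 4 vertices, monitors m1 ≠ m2,
m1m2 ∉ E(G), the interior graph G − m1 − m2 is (nonempty and) connected, and every
interior link is identifiable, then G + m1m2 is 3-vertex-connected. -/
theorem all_interior_identifiable_implies_three_connected {V : Type*} [Fintype V] [DecidableEq V]
    (G : SimpleGraph V) (hG : G.Connected) (hcard : 4 ≤ Fintype.card V)
    (m1 m2 : V) (hm : m1 ≠ m2) (hnadj : ¬ G.Adj m1 m2)
    (hH : (G.induce {v | v ≠ m1 ∧ v ≠ m2}).Connected)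
    (hid : ∀ e ∈ G.edgeSet, (∀ x ∈ e, x ≠ m1 ∧ x ≠ m2) → Identifiable G m1 m2 e) :
    KVertexConnected (G ⊔ SimpleGraph.fromEdgeSet {s(m1, m2)}) 3 := by
  classical
  refine ⟨by omega, ?_⟩
  intro S hS
  by_contra hncon
  by_cases hmS : m1 ∈ S ∧ m2 ∈ S
  · apply hncon
    refine induce_connected_transfer (s := {v | v ≠ m1 ∧ v ≠ m2}) ?_ ?_ hH
    · have hSeq : S = {m1, m2} := by
        refine (Finset.eq_of_subset_of_card_le ?_ ?_).symm
        · exact Finset.insert_subset hmS.1 (Finset.singleton_subset_iff.mpr hmS.2)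
        · rw [Finset.card_pair hm]; omega
      ext v
      simp only [Finset.coe_compl, Set.mem_compl_iff, Finset.mem_coe, hSeq,
        Finset.mem_insert, Finset.mem_singleton, Set.mem_setOf_eq]
      tauto
    · intro a b ha hb
      constructor
      · intro h; exact Or.inl h
      · intro h
        rcases h with h | h
        · exact h
        · rw [SimpleGraph.fromEdgeSet_adj] at h
          obtain ⟨h1, -⟩ := h
          rw [Set.mem_singleton_iff, Sym2.eq_iff] at h1
          rcases h1 with ⟨rfl, rfl⟩ | ⟨rfl, rfl⟩
          · exact absurd rfl ha.1
          · exact absurd rfl ha.2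
  · set K : Set V := (↑(Sᶜ) : Set V) with hK
    set G2 : SimpleGraph V := G ⊔ SimpleGraph.fromEdgeSet {s(m1, m2)} with hG2
    have hKm : ∀ z, z ∉ S → z ∈ K := fun z hz => by rw [hK]; simp [hz]
    obtain ⟨b, hb, hbr⟩ : ∃ b, ∃ hb : b ∈ K,
        ∀ z, ∀ hz : z ∈ K, z = m1 ∨ z = m2 →
          (G2.induce K).Reachable ⟨b, hb⟩ ⟨z, hz⟩ := by
      by_cases h1 : m1 ∈ S
      · have h2 : m2 ∉ S := fun h => hmS ⟨h1, h⟩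
        refine ⟨m2, hKm _ h2, ?_⟩
        rintro z hz h
        rcases h with h | h
        · subst z
          exact absurd h1 (by simpa [hK] using hz)
        · subst z
          exact SimpleGraph.Reachable.refl _
      · refine ⟨m1, hKm _ h1, ?_⟩
        rintro z hz h
        rcases h with h | h
        · subst z
          exact SimpleGraph.Reachable.refl _
        · subst z
          refine SimpleGraph.Adj.reachable ?_
          show G2.Adj m1 m2
          rw [hG2]
          exact Or.inr (by simp [SimpleGraph.fromEdgeSet_adj, hm])
    set A : Set V := {z | ∃ hz : z ∈ K,
      ¬ (G2.induce K).Reachable ⟨b, hb⟩ ⟨z, hz⟩} with hA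
    have hAm1 : m1 ∉ A := by
      rintro ⟨hz, hnr⟩
      exact hnr (hbr m1 hz (Or.inl rfl))
    have hAm2 : m2 ∉ A := by
      rintro ⟨hz, hnr⟩
      exact hnr (hbr m2 hz (Or.inr rfl))
    have hAS : ∀ a ∈ A, a ∉ S := by
      rintro a ⟨hz, -⟩
      rw [hK] at hz
      simpa using hz
    have hAne : A.Nonempty := by
      haveI hKne : Nonempty K := ⟨⟨b, hb⟩⟩
      have hnpre : ¬ (G2.induce K).Preconnected :=
        fun hpre => hncon ⟨hpre⟩
      obtain ⟨p, q, hpq⟩ : ∃ p q : K,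
          ¬ (G2.induce K).Reachable p q := by
        by_contra hc
        push_neg at hc
        exact hnpre fun p q => hc p q
      by_cases hbp : (G2.induce K).Reachable ⟨b, hb⟩ p
      · by_cases hbq : (G2.induce K).Reachable ⟨b, hb⟩ q
        · exact absurd (hbp.symm.trans hbq) hpq
        · exact ⟨q.1, q.2, hbq⟩
      · exact ⟨p.1, p.2, hbp⟩
    have hbd0 : ∀ a ∈ A, ∀ v, G.Adj a v → v ∈ A ∨ v ∈ S := by
      intro a ha v hadj
      by_cases hvS : v ∈ S
      · exact Or.inr hvS
      · left
        obtain ⟨haK, hnr⟩ := ha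
        refine ⟨hKm v hvS, fun hr => hnr (hr.trans ?_)⟩
        refine SimpleGraph.Adj.reachable ?_
        show G2.Adj v a
        rw [hG2]
        exact Or.inl hadj.symm
    obtain ⟨x, y, hcov, hxA, hyA, hxyS⟩ : ∃ x y : V, (∀ s ∈ S, s = x ∨ s = y) ∧
        x ∉ A ∧ y ∉ A ∧ (x ≠ y → x ∈ S ∧ y ∈ S) := by
      by_cases h0 : S.card = 0
      · exact ⟨m1, m1, by simp [Finset.card_eq_zero.mp h0], hAm1, hAm1,
          fun h => absurd rfl h⟩
      · by_cases h1 : S.card = 1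
        · obtain ⟨x, hx⟩ := Finset.card_eq_one.mp h1
          exact ⟨x, x, fun s hs => Or.inl (by simpa [hx] using hs),
            fun hxa => hAS x hxa (by simp [hx]), fun hxa => hAS x hxa (by simp [hx]),
            fun h => absurd rfl h⟩
        · have h2 : S.card = 2 := by omega
          obtain ⟨x, y, hxy, hS2⟩ := Finset.card_eq_two.mp h2
          refine ⟨x, y, ?_, fun hxa => hAS x hxa (by simp [hS2]),
            fun hya => hAS y hya (by simp [hS2]),
            fun _ => ⟨by simp [hS2], by simp [hS2]⟩⟩
          intro s hs
          rw [hS2] at hs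
          simpa using hs
    have hmon : x ≠ y → ¬((x = m1 ∨ x = m2) ∧ (y = m1 ∨ y = m2)) := by
      rintro hxy ⟨hx, hy⟩
      obtain ⟨hxS, hyS⟩ := hxyS hxy
      rcases hx with rfl | rfl <;> rcases hy with rfl | rfl
      · exact hxy rfl
      · exact hmS ⟨hxS, hyS⟩
      · exact hmS ⟨hyS, hxS⟩
      · exact hxy rfl
    exact main_from_A G hG hcard m1 m2 hm hnadj hH hid A hAne hAm1 hAm2 x y hxA hyA hmon
      (fun a ha v hv => (hbd0 a ha v hv).imp id (fun h => hcov v h))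
end

section
/- Let G be a finite connected simple graph with at least 4 vertices and two distinguished vertices m1 ≠ m2 (the monitors) with m1m2 ∉ E(G), and suppose the interior graph H = G − m1 − m2 is connected. Then G + m1m2 (the graph obtained by adding the edge m1m2) is 3-vertex-connected if and only if for every pair of distinct vertices u1, u2 of G, either G − u1 − u2 is connected, or every connected component of G − u1 − u2 contains m1 or m2. -/
open SimpleGraph

private lemma aux_connected_congr {V : Type*} (G : SimpleGraph V) {s t : Set V} (h : s = t) :
    (G.induce s).Connected ↔ (G.induce t).Connected := by subst h; rfl

private lemma aux_exists_not_mem {V : Type*} [Fintype V] [DecidableEq V] {T : Finset V}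
    (h : T.card < Fintype.card V) : ∃ v, v ∉ T := by
  by_contra hc
  push_neg at hc
  have : T = Finset.univ := Finset.eq_univ_iff_forall.mpr hc
  rw [this, Finset.card_univ] at h
  exact lt_irrefl _ h

private lemma aux_induce_le {V : Type*} {G H : SimpleGraph V} (h : G ≤ H) (s : Set V) :
    G.induce s ≤ H.induce s := by
  intro a b hab
  exact h hab

/-- Under the standing assumptions, G + m1m2 is 3-vertex-connected iff
for all distinct u1, u2, either G − u1 − u2 is connected or every connected component
of G − u1 − u2 contains a monitor. -/
theorem three_connected_iff_components_have_monitor {V : Type*} [Fintype V] [DecidableEq V]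
    (G : SimpleGraph V) (hG : G.Connected) (hcard : 4 ≤ Fintype.card V)
    (m1 m2 : V) (hm : m1 ≠ m2) (hnadj : ¬ G.Adj m1 m2)
    (hH : (G.induce {v | v ≠ m1 ∧ v ≠ m2}).Connected) :
    KVertexConnected (G ⊔ SimpleGraph.fromEdgeSet {s(m1, m2)}) 3 ↔
    ∀ u1 u2 : V, u1 ≠ u2 →
      ((G.induce {v | v ≠ u1 ∧ v ≠ u2}).Connected ∨
       ∀ x : {v // v ≠ u1 ∧ v ≠ u2}, ∃ y : {v // v ≠ u1 ∧ v ≠ u2},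
         ((y : V) = m1 ∨ (y : V) = m2) ∧
         (G.induce {v | v ≠ u1 ∧ v ≠ u2}).Reachable x y) := by
  set G' := G ⊔ SimpleGraph.fromEdgeSet {s(m1, m2)} with hG'def
  have hadj : ∀ a b : V, G'.Adj a b ↔ G.Adj a b ∨ ((a = m1 ∧ b = m2) ∨ (a = m2 ∧ b = m1)) := by
    intro a b
    rw [hG'def]
    simp only [sup_adj, fromEdgeSet_adj, Set.mem_singleton_iff, Sym2.eq, Sym2.rel_iff',
      Prod.mk.injEq, Prod.swap_prod_mk]
    constructor
    · rintro (h | ⟨(⟨h1, h2⟩ | ⟨h1, h2⟩), -⟩)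
      · exact Or.inl h
      · exact Or.inr (Or.inl ⟨h1, h2⟩)
      · exact Or.inr (Or.inr ⟨h1, h2⟩)
    · rintro (h | (⟨h1, h2⟩ | ⟨h1, h2⟩))
      · exact Or.inl h
      · exact Or.inr ⟨Or.inl ⟨h1, h2⟩, h1 ▸ h2 ▸ hm⟩
      · exact Or.inr ⟨Or.inr ⟨h1, h2⟩, h1 ▸ h2 ▸ hm.symm⟩
  constructor
  · -- forward direction
    rintro ⟨-, hS⟩ u1 u2 hu
    have hc2 : ({u1, u2} : Finset V).card < 3 := by
      have h1 := Finset.card_insert_le u1 ({u2} : Finset V)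
      simp only [Finset.card_singleton] at h1
      omega
    have hcon' := hS {u1, u2} hc2
    have hset : (↑(({u1, u2} : Finset V)ᶜ) : Set V) = {v | v ≠ u1 ∧ v ≠ u2} := by
      ext v
      simp only [Finset.coe_compl, Set.mem_compl_iff, Finset.mem_coe, Finset.mem_insert,
        Finset.mem_singleton, not_or, Set.mem_setOf_eq]
    rw [aux_connected_congr _ hset] at hcon'
    by_cases hmon : ∀ x : {v // v ≠ u1 ∧ v ≠ u2}, ∃ y : {v // v ≠ u1 ∧ v ≠ u2},
        ((y : V) = m1 ∨ (y : V) = m2) ∧ (G.induce {v | v ≠ u1 ∧ v ≠ u2}).Reachable x y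
    · exact Or.inr hmon
    · left
      push_neg at hmon
      obtain ⟨x, hx⟩ := hmon
      have key : ∀ c d : {v | v ≠ u1 ∧ v ≠ u2},
          (G'.induce {v | v ≠ u1 ∧ v ≠ u2}).Walk c d →
          (G.induce {v | v ≠ u1 ∧ v ≠ u2}).Reachable x c →
          (G.induce {v | v ≠ u1 ∧ v ≠ u2}).Reachable x d := by
        intro c d p
        induction p with
        | nil => exact id
        | @cons c e d h q ih =>
          intro hxc
          apply ih
          have h' : G'.Adj ↑c ↑e := h
          rw [hadj] at h'
          rcases h' with h' | (⟨h1, -⟩ | ⟨h1, -⟩)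
          · exact hxc.trans
              ⟨SimpleGraph.Walk.cons (by exact h' : (G.induce _).Adj c e) SimpleGraph.Walk.nil⟩
          · exact absurd hxc (hx c (Or.inl h1))
          · exact absurd hxc (hx c (Or.inr h1))
      rw [connected_iff]
      refine ⟨fun a b => ?_, hcon'.nonempty⟩
      obtain ⟨pa⟩ := hcon'.preconnected x a
      obtain ⟨pb⟩ := hcon'.preconnected x b
      exact (key x a pa (SimpleGraph.Reachable.refl x)).symm.trans
        (key x b pb (SimpleGraph.Reachable.refl x))
  · -- backward direction
    intro hrhs
    have hGle : G ≤ G' := by rw [hG'def]; exact le_sup_left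
    have L2 : ∀ u1 u2 : V, u1 ≠ u2 → (G'.induce {v | v ≠ u1 ∧ v ≠ u2}).Connected := by
      intro u1 u2 hu
      rcases hrhs u1 u2 hu with hcon | hmon
      · exact hcon.mono (aux_induce_le hGle _)
      · rw [connected_iff]
        constructor
        · intro a b
          obtain ⟨ya, hya, hra⟩ := hmon a
          obtain ⟨yb, hyb, hrb⟩ := hmon b
          have lift : ∀ c d : {v | v ≠ u1 ∧ v ≠ u2},
              (G.induce {v | v ≠ u1 ∧ v ≠ u2}).Reachable c d →
              (G'.induce {v | v ≠ u1 ∧ v ≠ u2}).Reachable c d := fun c d h =>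
            h.mono (aux_induce_le hGle _)
          have hmid : (G'.induce {v | v ≠ u1 ∧ v ≠ u2}).Reachable ya yb := by
            by_cases hyy : ya = yb
            · exact hyy ▸ SimpleGraph.Reachable.refl ya
            · have hA : G'.Adj ↑ya ↑yb := by
                rw [hadj]
                rcases hya with h1 | h1 <;> rcases hyb with h2 | h2
                · exact absurd (Subtype.ext (h1.trans h2.symm)) hyy
                · exact Or.inr (Or.inl ⟨h1, h2⟩)
                · exact Or.inr (Or.inr ⟨h1, h2⟩)
                · exact absurd (Subtype.ext (h1.trans h2.symm)) hyy
              exact ⟨SimpleGraph.Walk.cons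
                (by exact hA : (G'.induce _).Adj ya yb) SimpleGraph.Walk.nil⟩
          exact ((lift a ya hra).trans hmid).trans (lift b yb hrb).symm
        · obtain ⟨v, hv⟩ := aux_exists_not_mem (T := ({u1, u2} : Finset V)) (by
            have h1 := Finset.card_insert_le u1 ({u2} : Finset V)
            simp only [Finset.card_singleton] at h1
            omega)
          simp only [Finset.mem_insert, Finset.mem_singleton, not_or] at hv
          exact ⟨⟨v, hv.1, hv.2⟩⟩
    refine ⟨by omega, fun S hScard => ?_⟩
    rw [connected_iff]
    constructor
    · rintro ⟨a, (ha : a ∈ (↑(Sᶜ) : Set V))⟩ ⟨b, (hb : b ∈ (↑(Sᶜ) : Set V))⟩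
      have haS : a ∉ S := by simpa using ha
      have hbS : b ∉ S := by simpa using hb
      have hcard3 : ∀ x y z : V, ({x, y, z} : Finset V).card < Fintype.card V := by
        intro x y z
        have h1 := Finset.card_insert_le x ({y, z} : Finset V)
        have h2 := Finset.card_insert_le y ({z} : Finset V)
        simp only [Finset.card_singleton] at h1 h2
        omega
      have hpair : ∃ w1 w2 : V, w1 ≠ w2 ∧ (↑S : Set V) ⊆ {w1, w2} ∧
          w1 ≠ a ∧ w1 ≠ b ∧ w2 ≠ a ∧ w2 ≠ b := by
        interval_cases hc : S.card
        · obtain ⟨w1, hw1⟩ := aux_exists_not_mem (T := ({a, b} : Finset V)) (by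
            have h1 := Finset.card_insert_le a ({b} : Finset V)
            simp only [Finset.card_singleton] at h1
            omega)
          obtain ⟨w2, hw2⟩ := aux_exists_not_mem (T := ({a, b, w1} : Finset V)) (hcard3 a b w1)
          simp only [Finset.mem_insert, Finset.mem_singleton, not_or] at hw1 hw2
          refine ⟨w1, w2, fun hww => hw2.2.2 hww.symm, ?_, hw1.1, hw1.2, hw2.1, hw2.2.1⟩
          rw [Finset.card_eq_zero.mp hc]
          simp
        · obtain ⟨c, hcS⟩ := Finset.card_eq_one.mp hc
          obtain ⟨w2, hw2⟩ := aux_exists_not_mem (T := ({a, b, c} : Finset V)) (hcard3 a b c)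
          simp only [Finset.mem_insert, Finset.mem_singleton, not_or] at hw2
          have hcmem : c ∈ S := by rw [hcS]; simp
          refine ⟨c, w2, fun hww => hw2.2.2 hww.symm, ?_, fun h => haS (h ▸ hcmem),
            fun h => hbS (h ▸ hcmem), hw2.1, hw2.2.1⟩
          rw [hcS]
          simp
        · obtain ⟨c, d, hcd, hS2⟩ := Finset.card_eq_two.mp hc
          have hcmem : c ∈ S := by rw [hS2]; simp
          have hdmem : d ∈ S := by rw [hS2]; simp
          refine ⟨c, d, hcd, ?_, fun h => haS (h ▸ hcmem), fun h => hbS (h ▸ hcmem),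
            fun h => haS (h ▸ hdmem), fun h => hbS (h ▸ hdmem)⟩
          rw [hS2]
          simp
      obtain ⟨w1, w2, hww, hScov, h1a, h1b, h2a, h2b⟩ := hpair
      have hcon := L2 w1 w2 hww
      have hmem : ∀ v : V, (v ≠ w1 ∧ v ≠ w2) → v ∈ (↑(Sᶜ) : Set V) := by
        intro v hv
        simp only [Finset.coe_compl, Set.mem_compl_iff, Finset.mem_coe]
        intro hvS
        rcases hScov hvS with h | h
        · exact hv.1 h
        · exact hv.2 h
      let f : (G'.induce {v | v ≠ w1 ∧ v ≠ w2}) →g (G'.induce (↑(Sᶜ) : Set V)) :=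
        ⟨fun v => ⟨v.1, hmem v.1 v.2⟩, fun h => h⟩
      have hra : (G'.induce {v | v ≠ w1 ∧ v ≠ w2}).Reachable
          ⟨a, fun h => h1a h.symm, fun h => h2a h.symm⟩
          ⟨b, fun h => h1b h.symm, fun h => h2b h.symm⟩ :=
        hcon.preconnected _ _
      exact hra.map f
    · obtain ⟨v, hv⟩ := aux_exists_not_mem (lt_of_lt_of_le hScard (by omega))
      exact ⟨⟨v, by simpa using hv⟩⟩
end

section
/- Let G be a finite connected simple graph with two distinguished vertices m1 ≠ m2 (the monitors), m1m2 ∉ E(G), such that G + m1m2 (the graph obtained by adding the edge m1m2) is 3-vertex-connected. Let vw ∈ E(G) be an interior link (neither v nor w is a monitor) such that G − vw is 2-edge-connected. Then there exist two cycles C1 and C2 in G, both containing the edge vw, such that |V(C1) ∩ V(C2)| ≤ 3. -/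
open SimpleGraph

open SimpleGraph Walk

namespace TwoCyclesAux

variable {V : Type*} [DecidableEq V] {K : SimpleGraph V}

/-- In a path ending at `b`, the endpoint `b` does not appear in a proper prefix. -/
lemma endpoint_not_mem_takeUntil {a b c : V} {p : K.Walk a b} (hp : p.IsPath)
    (hc : c ∈ p.support) (hcb : c ≠ b) : b ∉ (p.takeUntil c hc).support := by
  intro hb
  have hspec := p.take_spec hc
  have hnodup : p.support.Nodup := hp.support_nodup
  rw [← hspec, Walk.support_append] at hnodup
  have hdisj := List.disjoint_of_nodup_append hnodup
  have hb2 : b ∈ (p.dropUntil c hc).support.tail := by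
    have hend : b ∈ (p.dropUntil c hc).support := Walk.end_mem_support _
    have : (p.dropUntil c hc).support = c :: (p.dropUntil c hc).support.tail := by
      rw [Walk.support_eq_cons]; rfl
    rw [this] at hend
    rcases List.mem_cons.mp hend with h | h
    · exact absurd h.symm hcb
    · exact h
  exact hdisj hb hb2

/-- In a path starting at `a`, the start `a` does not appear in a proper suffix. -/
lemma start_not_mem_dropUntil {a b c : V} {p : K.Walk a b} (hp : p.IsPath)
    (hc : c ∈ p.support) (hca : c ≠ a) : a ∉ (p.dropUntil c hc).support := by
  intro ha
  have hspec := p.take_spec hc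
  have hnodup : p.support.Nodup := hp.support_nodup
  rw [← hspec, Walk.support_append] at hnodup
  have hdisj := List.disjoint_of_nodup_append hnodup
  have ha2 : a ∈ (p.dropUntil c hc).support.tail := by
    have : (p.dropUntil c hc).support = c :: (p.dropUntil c hc).support.tail := by
      rw [Walk.support_eq_cons]; rfl
    rw [this] at ha
    rcases List.mem_cons.mp ha with h | h
    · exact absurd h.symm hca
    · exact h
  exact hdisj (Walk.start_mem_support _) ha2

/-- A vertex in both the prefix and the suffix must be the pivot. -/
lemma mem_takeUntil_mem_dropUntil {a b c t : V} {p : K.Walk a b} (hp : p.IsPath)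
    (hc : c ∈ p.support) (h1 : t ∈ (p.takeUntil c hc).support)
    (h2 : t ∈ (p.dropUntil c hc).support) : t = c := by
  by_contra hne
  have hspec := p.take_spec hc
  have hnodup : p.support.Nodup := hp.support_nodup
  rw [← hspec, Walk.support_append] at hnodup
  have hdisj := List.disjoint_of_nodup_append hnodup
  have ht2 : t ∈ (p.dropUntil c hc).support.tail := by
    have : (p.dropUntil c hc).support = c :: (p.dropUntil c hc).support.tail := by
      rw [Walk.support_eq_cons]; rfl
    rw [this] at h2
    rcases List.mem_cons.mp h2 with h | h
    · exact absurd h hne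
    · exact h
  exact hdisj h1 ht2

/-- If a path starts at `a` and contains the edge `s(a,c)`, it starts with that edge. -/
lemma firstEdge {a b c : V} (p : K.Walk a b) (hp : p.IsPath)
    (he : s(a, c) ∈ p.edges) :
    ∃ (h : K.Adj a c) (q : K.Walk c b), p = Walk.cons h q ∧ a ∉ q.support := by
  cases p with
  | nil => simp at he
  | @cons _ x _ h q =>
    rw [Walk.edges_cons, List.mem_cons] at he
    rcases he with he | he
    · have hxc : c = x := Sym2.congr_right.mp he
      subst hxc
      exact ⟨h, q, rfl, ((Walk.cons_isPath_iff h q).mp hp).2⟩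
    · exact absurd (Walk.fst_mem_support_of_mem_edges q he)
        ((Walk.cons_isPath_iff h q).mp hp).2

/-- Gluing two paths that meet only at their common endpoint gives a path. -/
lemma isPath_append {a b c : V} {p : K.Walk a b} {q : K.Walk b c}
    (hp : p.IsPath) (hq : q.IsPath)
    (h : ∀ x ∈ p.support, x ∈ q.support → x = b) : (p.append q).IsPath := by
  rw [Walk.isPath_def, Walk.support_append]
  apply List.Nodup.append hp.support_nodup (hq.support_nodup.tail)
  intro t ht1 ht2
  have ht3 : t ∈ q.support := by
    have : q.support = b :: q.support.tail := by rw [Walk.support_eq_cons]; rfl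
    rw [this]; exact List.mem_cons_of_mem _ ht2
  have htb : t = b := h t ht1 ht3
  subst htb
  have : q.support = t :: q.support.tail := by rw [Walk.support_eq_cons]; rfl
  have hnd := hq.support_nodup
  rw [this] at hnd
  exact (List.nodup_cons.mp hnd).1 ht2

/-- First vertex on a walk satisfying a predicate (searching from the start). -/
lemma firstHit {a b : V} (R : K.Walk a b) (C : V → Prop) (hb : C b) :
    ∃ (z : V) (r : K.Walk a z), C z ∧ (∀ x ∈ r.support, C x → x = z) ∧
      r.support ⊆ R.support := by
  induction R with
  | nil =>
    exact ⟨_, Walk.nil, hb, by simp, by simp⟩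
  | @cons u x b h R' ih =>
    by_cases hCa : C u
    · refine ⟨u, Walk.nil, hCa, by simp, by simp⟩
    · obtain ⟨z, r, hCz, honly, hsub⟩ := ih hb
      refine ⟨z, Walk.cons h r, hCz, ?_, ?_⟩
      · intro t ht hCt
        rw [Walk.support_cons, List.mem_cons] at ht
        rcases ht with rfl | ht
        · exact absurd hCt hCa
        · exact honly t ht hCt
      · rw [Walk.support_cons, Walk.support_cons]
        intro t ht
        rcases List.mem_cons.mp ht with rfl | ht
        · exact List.mem_cons_self
        · exact List.mem_cons_of_mem _ (hsub ht)

end TwoCyclesAux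

set_option linter.unusedSectionVars false
namespace TwoCyclesAux

open SimpleGraph Walk

variable {V : Type*} [DecidableEq V] {K : SimpleGraph V}

/-- Whitney's theorem, local form: if no single vertex separates any reachable pair,
then any two distinct reachable vertices are joined by two internally disjoint paths
(possibly both equal to a single edge). -/
theorem whitney (K : SimpleGraph V)
    (h2 : ∀ x a b : V, a ≠ x → b ≠ x → K.Reachable a b →
      ∃ p : K.Walk a b, x ∉ p.support) :
    ∀ (u w : V), u ≠ w → K.Reachable u w →
    ∃ (p q : K.Walk u w), p.IsPath ∧ q.IsPath ∧
      ∀ x, x ∈ p.support → x ∈ q.support → x = u ∨ x = w := by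
  suffices H : ∀ (n : ℕ) (u w : V), u ≠ w → K.Reachable u w → K.dist u w ≤ n →
      ∃ (p q : K.Walk u w), p.IsPath ∧ q.IsPath ∧
        ∀ x, x ∈ p.support → x ∈ q.support → x = u ∨ x = w by
    intro u w hne hr
    exact H (K.dist u w) u w hne hr le_rfl
  intro n
  induction n with
  | zero =>
    intro u w hne hr hd
    exact absurd (hr.dist_eq_zero_iff.mp (Nat.le_zero.mp hd)) hne
  | succ n ih =>
    intro u w hne hr hd
    by_cases hdn : K.dist u w ≤ n
    · exact ih u w hne hr hdn
    have hdeq : K.dist u w = n + 1 := le_antisymm hd (Nat.lt_of_not_le hdn)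
    obtain ⟨p0, hp0path, hp0len⟩ := hr.exists_path_of_dist
    have hd0 : K.dist u w ≠ 0 := fun h => hne (hr.dist_eq_zero_iff.mp h)
    by_cases hd1 : K.dist u w = 1
    · refine ⟨p0, p0, hp0path, hp0path, ?_⟩
      intro t ht _
      rw [hd1] at hp0len
      rcases p0 with _ | ⟨h, q⟩
      · simp at hp0len
      · rcases q with _ | ⟨h2, q2⟩
        · simp only [Walk.support_cons, Walk.support_nil, List.mem_cons,
            List.not_mem_nil, or_false] at ht
          tauto
        · simp at hp0len
    rw [hdeq] at hp0len
    rcases hrev : p0.reverse with _ | ⟨hadj', r'⟩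
    · exfalso
      have := congrArg Walk.length hrev
      simp [hp0len] at this
    · rename_i x
      have hr'len : r'.length = n := by
        have := congrArg Walk.length hrev
        rw [Walk.length_reverse, hp0len, Walk.length_cons] at this
        omega
      have hrux : K.Reachable u x := ⟨r'.reverse⟩
      have hdux : K.dist u x ≤ n := by
        calc K.dist u x ≤ r'.reverse.length := SimpleGraph.dist_le _
        _ = n := by rw [Walk.length_reverse, hr'len]
      have hux : u ≠ x := by
        rintro rfl
        have h1 : K.dist w u ≤ (Walk.cons hadj' Walk.nil : K.Walk w u).length :=
          SimpleGraph.dist_le _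
        rw [SimpleGraph.dist_comm] at h1
        simp only [Walk.length_cons, Walk.length_nil] at h1
        omega
      have hwx : w ≠ x := fun h => hdn (by rw [h]; exact hdux)
      obtain ⟨P1, P2, hP1, hP2, hint⟩ := ih u x hux hrux hdux
      have hadj : K.Adj x w := hadj'.symm
      have hQ2 : ∀ (Pb : K.Walk u x), Pb.IsPath → w ∉ Pb.support →
          (Pb.append (Walk.cons hadj Walk.nil)).IsPath := by
        intro Pb hPb hwPb
        apply isPath_append hPb (by simp [Walk.isPath_def, List.nodup_cons, hwx.symm])
        intro t htPb ht2
        simp only [Walk.support_cons, Walk.support_nil, List.mem_cons,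
          List.not_mem_nil, or_false] at ht2
        rcases ht2 with rfl | rfl
        · rfl
        · exact absurd htPb hwPb
      have hQ2mem : ∀ (Pb : K.Walk u x) (t : V),
          t ∈ (Pb.append (Walk.cons hadj Walk.nil)).support →
          t ∈ Pb.support ∨ t = x ∨ t = w := by
        intro Pb t ht
        rw [Walk.mem_support_append_iff] at ht
        rcases ht with ht | ht
        · exact Or.inl ht
        · simp only [Walk.support_cons, Walk.support_nil, List.mem_cons,
            List.not_mem_nil, or_false] at ht
          rcases ht with rfl | rfl
          · exact Or.inr (Or.inl rfl)
          · exact Or.inr (Or.inr rfl)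
      by_cases hw1 : w ∈ P1.support ∨ w ∈ P2.support
      · -- w lies on one of the two paths
        have finish1 : ∀ (Pa Pb : K.Walk u x), Pa.IsPath → Pb.IsPath →
            (∀ t, t ∈ Pa.support → t ∈ Pb.support → t = u ∨ t = x) →
            w ∈ Pa.support → w ∉ Pb.support →
            ∃ (p q : K.Walk u w), p.IsPath ∧ q.IsPath ∧
              ∀ t, t ∈ p.support → t ∈ q.support → t = u ∨ t = w := by
          intro Pa Pb hPa hPb hintab hwPa hwPb
          have hxQ1 : x ∉ (Pa.takeUntil w hwPa).support :=
            endpoint_not_mem_takeUntil hPa hwPa hwx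
          refine ⟨Pa.takeUntil w hwPa, Pb.append (Walk.cons hadj Walk.nil),
            hPa.takeUntil hwPa, hQ2 Pb hPb hwPb, ?_⟩
          intro t ht1 ht2
          have ht1' : t ∈ Pa.support := Walk.support_takeUntil_subset _ _ ht1
          rcases hQ2mem Pb t ht2 with ht2 | rfl | rfl
          · rcases hintab t ht1' ht2 with rfl | rfl
            · exact Or.inl rfl
            · exact absurd ht1 hxQ1
          · exact absurd ht1 hxQ1
          · exact Or.inr rfl
        rcases hw1 with hw1 | hw1
        · have hw2 : w ∉ P2.support := by
            intro hw2
            rcases hint w hw1 hw2 with rfl | rfl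
            · exact hne rfl
            · exact hwx rfl
          exact finish1 P1 P2 hP1 hP2 hint hw1 hw2
        · have hw2 : w ∉ P1.support := by
            intro hw2
            rcases hint w hw2 hw1 with rfl | rfl
            · exact hne rfl
            · exact hwx rfl
          exact finish1 P2 P1 hP2 hP1 (fun t h1 h2 => hint t h2 h1) hw1 hw2
      · push_neg at hw1
        obtain ⟨hwP1, hwP2⟩ := hw1
        obtain ⟨R0, hR0⟩ := h2 x w u hwx hux ⟨p0.reverse⟩
        obtain ⟨z, r0, hCz, honly, hsub⟩ := firstHit R0
          (fun t => t ∈ P1.support ∨ t ∈ P2.support) (Or.inl (Walk.start_mem_support P1))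
        have hrpath : r0.bypass.IsPath := Walk.bypass_isPath r0
        have hrsub : r0.bypass.support ⊆ r0.support := Walk.support_bypass_subset r0
        set r := r0.bypass with hrdef
        have hxr : x ∉ r.support := fun h => hR0 (hsub (hrsub h))
        have honly' : ∀ t ∈ r.support, (t ∈ P1.support ∨ t ∈ P2.support) → t = z :=
          fun t ht => honly t (hrsub ht)
        have hzx : z ≠ x := by
          rintro rfl
          exact hxr (Walk.end_mem_support r)
        have finish2 : ∀ (Pa Pb : K.Walk u x), Pa.IsPath → Pb.IsPath →
            (∀ t, t ∈ Pa.support → t ∈ Pb.support → t = u ∨ t = x) →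
            w ∉ Pa.support → w ∉ Pb.support → z ∈ Pa.support →
            (∀ t ∈ r.support, (t ∈ Pa.support ∨ t ∈ Pb.support) → t = z) →
            ∃ (p q : K.Walk u w), p.IsPath ∧ q.IsPath ∧
              ∀ t, t ∈ p.support → t ∈ q.support → t = u ∨ t = w := by
          intro Pa Pb hPa hPb hintab hwPa hwPb hzPa honlyAB
          have hxQ1 : x ∉ (Pa.takeUntil z hzPa).support :=
            endpoint_not_mem_takeUntil hPa hzPa hzx
          refine ⟨(Pa.takeUntil z hzPa).append r.reverse,
            Pb.append (Walk.cons hadj Walk.nil), ?_, hQ2 Pb hPb hwPb, ?_⟩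
          · apply isPath_append (hPa.takeUntil hzPa) hrpath.reverse
            intro t ht1 ht2
            rw [Walk.support_reverse, List.mem_reverse] at ht2
            exact honlyAB t ht2 (Or.inl (Walk.support_takeUntil_subset _ _ ht1))
          · intro t ht1 ht2
            rw [Walk.mem_support_append_iff] at ht1
            have ht2' := hQ2mem Pb t ht2
            rcases ht1 with ht1 | ht1
            · have ht1' : t ∈ Pa.support := Walk.support_takeUntil_subset _ _ ht1
              rcases ht2' with ht2' | rfl | rfl
              · rcases hintab t ht1' ht2' with rfl | rfl
                · exact Or.inl rfl
                · exact absurd ht1 hxQ1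
              · exact absurd ht1 hxQ1
              · exact Or.inr rfl
            · rw [Walk.support_reverse, List.mem_reverse] at ht1
              rcases ht2' with ht2' | rfl | rfl
              · have htz : t = z := honlyAB t ht1 (Or.inr ht2')
                subst htz
                rcases hintab t hzPa ht2' with rfl | rfl
                · exact Or.inl rfl
                · exact absurd rfl hzx
              · exact absurd ht1 hxr
              · exact Or.inr rfl
        rcases hCz with hCz | hCz
        · exact finish2 P1 P2 hP1 hP2 hint hwP1 hwP2 hCz honly'
        · exact finish2 P2 P1 hP2 hP1 (fun t h1 h2 => hint t h2 h1) hwP2 hwP1 hCz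
            (fun t ht h => honly' t ht h.symm)

end TwoCyclesAux

namespace TwoCyclesAux
open SimpleGraph Walk

variable {V : Type*} [DecidableEq V]

theorem sideWhitney (H : SimpleGraph V) (a b : V) (hab : a ≠ b)
    (Good : H.Walk a b → Prop)
    (hGP : ∀ p, Good p → p.IsPath)
    (hex : ∃ p, Good p)
    (havoid : ∀ x, x ≠ a → x ≠ b → ∃ p, Good p ∧ x ∉ p.support) :
    ∃ (p q : H.Walk a b), p.IsPath ∧ q.IsPath ∧
      (∀ y ∈ p.support, ∃ g, Good g ∧ y ∈ g.support) ∧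
      (∀ y ∈ q.support, ∃ g, Good g ∧ y ∈ g.support) ∧
      (∀ x, x ∈ p.support → x ∈ q.support → x = a ∨ x = b) := by
  classical
  set T : Set V := {y | ∃ g, Good g ∧ y ∈ g.support} with hT
  let K : SimpleGraph V :=
    { Adj := fun c d => H.Adj c d ∧ c ∈ T ∧ d ∈ T
      symm := ⟨fun c d ⟨h, hc, hd⟩ => ⟨h.symm, hd, hc⟩⟩
      loopless := ⟨fun c h => H.loopless.irrefl c h.1⟩ }
  have hKle : ∀ {c d : V}, K.Adj c d → H.Adj c d := fun h => h.1
  have hKH : ∀ {c d : V} (p : K.Walk c d), ∀ e ∈ p.edges, e ∈ H.edgeSet := by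
    intro c d p e he
    have he' : e ∈ K.edgeSet := p.edges_subset_edgeSet he
    induction e with
    | h x y => exact hKle he'
  have hGK : ∀ (g : H.Walk a b), Good g → ∀ e ∈ g.edges, e ∈ K.edgeSet := by
    intro g hg e he
    induction e with
    | h x y =>
      rw [SimpleGraph.mem_edgeSet]
      exact ⟨g.adj_of_mem_edges he,
        ⟨g, hg, g.fst_mem_support_of_mem_edges he⟩,
        ⟨g, hg, g.snd_mem_support_of_mem_edges he⟩⟩
  have KsupportT : ∀ {c d : V} (p : K.Walk c d), ∀ y ∈ p.support,
      y ∈ T ∨ (y = c ∧ y = d ∧ p.length = 0) := by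
    intro c d p
    induction p with
    | nil =>
      intro y hy
      simp only [Walk.support_nil, List.mem_singleton] at hy
      exact Or.inr ⟨hy, hy, rfl⟩
    | @cons c e d h q ih =>
      intro y hy
      rw [Walk.support_cons, List.mem_cons] at hy
      rcases hy with rfl | hy
      · exact Or.inl h.2.1
      · rcases ih y hy with hT' | ⟨rfl, _, _⟩
        · exact Or.inl hT'
        · exact Or.inl h.2.2
  -- from a vertex of T, we can reach a or b avoiding any given x
  have claim1 : ∀ (x c : V), c ∈ T → c ≠ x →
      ∃ (e : V), (e = a ∨ e = b) ∧ ∃ qc : K.Walk c e, x ∉ qc.support := by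
    intro x c hcT hcx
    obtain ⟨g, hg, hcg⟩ := hcT
    have hgpath := hGP g hg
    set gk := g.transfer K (hGK g hg) with hgk
    have hgksup : gk.support = g.support := g.support_transfer _
    have hgkpath : gk.IsPath := hgpath.transfer _
    have hcgk : c ∈ gk.support := by rw [hgksup]; exact hcg
    by_cases hxg : x ∈ gk.support
    · by_cases hcin : c ∈ (gk.takeUntil x hxg).support
      · refine ⟨a, Or.inl rfl, ((gk.takeUntil x hxg).takeUntil c hcin).reverse, ?_⟩
        rw [Walk.support_reverse, List.mem_reverse]
        exact endpoint_not_mem_takeUntil (hgkpath.takeUntil hxg) hcin hcx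
      · have hcdrop : c ∈ (gk.dropUntil x hxg).support := by
          have := hcgk
          rw [← gk.take_spec hxg, Walk.mem_support_append_iff] at this
          rcases this with h | h
          · exact absurd h hcin
          · exact h
        refine ⟨b, Or.inr rfl, (gk.dropUntil x hxg).dropUntil c hcdrop, ?_⟩
        exact start_not_mem_dropUntil (hgkpath.dropUntil hxg) hcdrop hcx
    · refine ⟨b, Or.inr rfl, gk.dropUntil c hcgk, ?_⟩
      exact fun hx => hxg (Walk.support_dropUntil_subset _ _ hx)
  -- the separation hypothesis for K
  have h2 : ∀ x c d : V, c ≠ x → d ≠ x → K.Reachable c d →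
      ∃ p : K.Walk c d, x ∉ p.support := by
    intro x c d hcx hdx hr
    obtain ⟨pk⟩ := hr
    by_cases hcd : c = d
    · subst hcd
      exact ⟨Walk.nil, by simpa using (Ne.symm hcx)⟩
    have hcT : c ∈ T := by
      rcases KsupportT pk c pk.start_mem_support with h | ⟨_, h2', _⟩
      · exact h
      · exact absurd h2' hcd
    have hdT : d ∈ T := by
      rcases KsupportT pk d pk.end_mem_support with h | ⟨h2', _, _⟩
      · exact h
      · exact absurd h2'.symm hcd
    obtain ⟨e1, he1, qc, hqc⟩ := claim1 x c hcT hcx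
    obtain ⟨e2, he2, qd, hqd⟩ := claim1 x d hdT hdx
    by_cases he12 : e1 = e2
    · subst he12
      refine ⟨qc.append qd.reverse, ?_⟩
      rw [Walk.mem_support_append_iff, Walk.support_reverse, List.mem_reverse]
      rintro (h | h)
      · exact hqc h
      · exact hqd h
    · have hxa : x ≠ a := by
        rintro rfl
        have h1 : e1 = b := by
          rcases he1 with rfl | h
          · exact absurd qc.end_mem_support hqc
          · exact h
        have h2' : e2 = b := by
          rcases he2 with rfl | h
          · exact absurd qd.end_mem_support hqd
          · exact h
        exact he12 (h1.trans h2'.symm)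
      have hxb : x ≠ b := by
        rintro rfl
        have h1 : e1 = a := by
          rcases he1 with h | rfl
          · exact h
          · exact absurd qc.end_mem_support hqc
        have h2' : e2 = a := by
          rcases he2 with h | rfl
          · exact h
          · exact absurd qd.end_mem_support hqd
        exact he12 (h1.trans h2'.symm)
      obtain ⟨g, hg, hxg⟩ := havoid x hxa hxb
      set mk := g.transfer K (hGK g hg) with hmk
      have hmksup : x ∉ mk.support := by
        rw [g.support_transfer]; exact hxg
      rcases he1 with rfl | rfl
      · rcases he2 with rfl | rfl
        · exact absurd rfl he12
        · refine ⟨qc.append (mk.append qd.reverse), ?_⟩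
          rw [Walk.mem_support_append_iff, Walk.mem_support_append_iff,
            Walk.support_reverse, List.mem_reverse]
          rintro (h | h | h)
          · exact hqc h
          · exact hmksup h
          · exact hqd h
      · rcases he2 with rfl | rfl
        · refine ⟨qc.append (mk.reverse.append qd.reverse), ?_⟩
          rw [Walk.mem_support_append_iff, Walk.mem_support_append_iff,
            Walk.support_reverse, Walk.support_reverse, List.mem_reverse,
            List.mem_reverse]
          rintro (h | h | h)
          · exact hqc h
          · exact hmksup h
          · exact hqd h
        · exact absurd rfl he12
  -- apply Whitney
  obtain ⟨g0, hg0⟩ := hex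
  have hrK : K.Reachable a b := ⟨g0.transfer K (hGK g0 hg0)⟩
  obtain ⟨p, q, hp, hq, hint⟩ := whitney K h2 a b hab hrK
  have hmemT : ∀ (r : K.Walk a b), ∀ y ∈ r.support, ∃ g, Good g ∧ y ∈ g.support := by
    intro r y hy
    rcases KsupportT r y hy with h | ⟨h1, h2', _⟩
    · exact h
    · exact absurd (h1.symm.trans h2') hab
  refine ⟨p.transfer H (hKH p), q.transfer H (hKH q), hp.transfer _, hq.transfer _,
    ?_, ?_, ?_⟩
  · rw [p.support_transfer]; exact hmemT p
  · rw [q.support_transfer]; exact hmemT q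
  · intro x hx1 hx2
    rw [p.support_transfer] at hx1
    rw [q.support_transfer] at hx2
    exact hint x hx1 hx2

end TwoCyclesAux

namespace TwoCyclesAux
open SimpleGraph Walk

variable {V : Type*} [Fintype V] [DecidableEq V]
variable {G : SimpleGraph V} {m1 m2 v w : V}

/-- Extract a path in `G ⊔ m1m2` avoiding two given vertices, from 3-connectivity. -/
lemma h3walk (h3 : KVertexConnected (G ⊔ SimpleGraph.fromEdgeSet {s(m1, m2)}) 3)
    (x y a b : V) (hax : a ≠ x) (hay : a ≠ y) (hbx : b ≠ x) (hby : b ≠ y) :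
    ∃ p : (G ⊔ SimpleGraph.fromEdgeSet {s(m1, m2)}).Walk a b,
      p.IsPath ∧ x ∉ p.support ∧ y ∉ p.support := by
  have hcard : ({x, y} : Finset V).card < 3 :=
    lt_of_le_of_lt (Finset.card_insert_le _ _) (by simp)
  have hconn := h3.2 {x, y} hcard
  have ha : a ∈ (↑(({x, y} : Finset V)ᶜ) : Set V) := by simp [hax, hay]
  have hb : b ∈ (↑(({x, y} : Finset V)ᶜ) : Set V) := by simp [hbx, hby]
  obtain ⟨W⟩ := hconn ⟨a, ha⟩ ⟨b, hb⟩
  let emb := SimpleGraph.Embedding.induce (G := G ⊔ SimpleGraph.fromEdgeSet {s(m1, m2)})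
    (↑(({x, y} : Finset V)ᶜ) : Set V)
  let p0 := W.map emb.toHom
  have hx : ∀ t, t ∈ p0.support → t ≠ x ∧ t ≠ y := by
    intro t ht
    rw [Walk.support_map, List.mem_map] at ht
    obtain ⟨⟨s, hs⟩, _, rfl⟩ := ht
    simp only [Finset.coe_compl, Set.mem_compl_iff, Finset.mem_coe,
      Finset.mem_insert, Finset.mem_singleton, not_or] at hs
    exact hs
  refine ⟨p0.bypass, p0.bypass_isPath, fun h => ?_, fun h => ?_⟩
  · exact (hx x (p0.support_bypass_subset h)).1 rfl
  · exact (hx y (p0.support_bypass_subset h)).2 rfl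

lemma edge_mem_sup (hm12 : m1 ≠ m2) (e : Sym2 V) :
    e ∈ (G ⊔ SimpleGraph.fromEdgeSet {s(m1, m2)}).edgeSet ↔
      e ∈ G.edgeSet ∨ e = s(m1, m2) := by
  rw [edgeSet_sup, Set.mem_union, edgeSet_fromEdgeSet]
  constructor
  · rintro (h | ⟨h1, _⟩)
    · exact Or.inl h
    · exact Or.inr h1
  · rintro (h | rfl)
    · exact Or.inl h
    · exact Or.inr ⟨rfl, by simp [Sym2.isDiag_iff_proj_eq, hm12]⟩

/-- A walk of `G ⊔ m1m2` not using the extra edge is a walk of `G`. -/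
lemma G'toG (hm12 : m1 ≠ m2) {c d : V}
    (p : (G ⊔ SimpleGraph.fromEdgeSet {s(m1, m2)}).Walk c d)
    (hme : s(m1, m2) ∉ p.edges) :
    ∃ q : G.Walk c d, q.support = p.support ∧ q.edges = p.edges := by
  have hcond : ∀ e ∈ p.edges, e ∈ G.edgeSet := by
    intro e he
    rcases (edge_mem_sup hm12 e).mp (p.edges_subset_edgeSet he) with h | rfl
    · exact h
    · exact absurd he hme
  exact ⟨p.transfer G hcond, p.support_transfer _, p.edges_transfer _⟩

lemma G'toG_of_not_support (hm12 : m1 ≠ m2) {c d : V}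
    (p : (G ⊔ SimpleGraph.fromEdgeSet {s(m1, m2)}).Walk c d)
    (h : m1 ∉ p.support ∨ m2 ∉ p.support) :
    ∃ q : G.Walk c d, q.support = p.support ∧ q.edges = p.edges := by
  apply G'toG hm12
  intro hme
  rcases h with h | h
  · exact h (p.fst_mem_support_of_mem_edges hme)
  · exact h (p.snd_mem_support_of_mem_edges hme)

/-- A walk of `G` not visiting `v` or not visiting `w` is a walk of `H = G - vw`. -/
lemma GtoH_edges {H : SimpleGraph V}
    (hHadj : ∀ a b, H.Adj a b ↔ G.Adj a b ∧ s(a, b) ≠ s(v, w)) {c d : V}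
    (q : G.Walk c d) (hvw : s(v, w) ∉ q.edges) :
    ∃ r : H.Walk c d, r.support = q.support ∧ r.edges = q.edges := by
  have hcond : ∀ e ∈ q.edges, e ∈ H.edgeSet := by
    intro e he
    induction e with
    | h s t =>
      rw [SimpleGraph.mem_edgeSet, hHadj]
      exact ⟨q.adj_of_mem_edges he, fun hh => hvw (hh ▸ he)⟩
  exact ⟨q.transfer H hcond, q.support_transfer _, q.edges_transfer _⟩

lemma GtoH {H : SimpleGraph V}
    (hHadj : ∀ a b, H.Adj a b ↔ G.Adj a b ∧ s(a, b) ≠ s(v, w)) {c d : V}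
    (q : G.Walk c d) (hv : v ∉ q.support ∨ w ∉ q.support) :
    ∃ r : H.Walk c d, r.support = q.support ∧ r.edges = q.edges := by
  apply GtoH_edges hHadj
  intro h
  rcases hv with hv | hv
  · exact hv (q.fst_mem_support_of_mem_edges h)
  · exact hv (q.snd_mem_support_of_mem_edges h)

/-- Decomposition of a path of `G ⊔ m1m2` into `G`-walks. -/
lemma decompose (hm12 : m1 ≠ m2) {c d : V}
    (p : (G ⊔ SimpleGraph.fromEdgeSet {s(m1, m2)}).Walk c d) (hp : p.IsPath) :
    (∃ q : G.Walk c d, q.support ⊆ p.support ∧ q.edges ⊆ p.edges) ∨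
    (∃ (c' d' : V), ((c' = m1 ∧ d' = m2) ∨ (c' = m2 ∧ d' = m1)) ∧
      ∃ (q1 : G.Walk c c') (q2 : G.Walk d' d),
        q1.support ⊆ p.support ∧ q2.support ⊆ p.support ∧
        q1.edges ⊆ p.edges ∧ q2.edges ⊆ p.edges) := by
  by_cases hme : s(m1, m2) ∈ p.edges
  · right
    have hm1 : m1 ∈ p.support := p.fst_mem_support_of_mem_edges hme
    have hedges := congrArg Walk.edges (p.take_spec hm1)
    rw [Walk.edges_append] at hedges
    have hnodup : p.edges.Nodup := hp.isTrail.edges_nodup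
    have hnodup2 : ((p.takeUntil m1 hm1).edges ++ (p.dropUntil m1 hm1).edges).Nodup := by
      rw [hedges]; exact hnodup
    have hdisjE := List.disjoint_of_nodup_append hnodup2
    have hmem : s(m1, m2) ∈ (p.takeUntil m1 hm1).edges ∨
        s(m1, m2) ∈ (p.dropUntil m1 hm1).edges := by
      rw [← List.mem_append, hedges]; exact hme
    rcases hmem with hmem | hmem
    · -- the m-edge is in the prefix ending at m1
      have htrev : s(m1, m2) ∈ (p.takeUntil m1 hm1).reverse.edges := by
        rw [Walk.edges_reverse, List.mem_reverse]; exact hmem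
      obtain ⟨hadj, q', heq, hnq⟩ :=
        firstEdge _ ((hp.takeUntil hm1).reverse) htrev
      have hq'sub : q'.support ⊆ (p.takeUntil m1 hm1).support := by
        intro t ht
        have : t ∈ (p.takeUntil m1 hm1).reverse.support := by
          rw [heq, Walk.support_cons]; exact List.mem_cons_of_mem _ ht
        rwa [Walk.support_reverse, List.mem_reverse] at this
      have hq'edges : q'.edges ⊆ (p.takeUntil m1 hm1).edges := by
        intro e he
        have : e ∈ (p.takeUntil m1 hm1).reverse.edges := by
          rw [heq, Walk.edges_cons]; exact List.mem_cons_of_mem _ he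
        rwa [Walk.edges_reverse, List.mem_reverse] at this
      have hq'me : s(m1, m2) ∉ q'.reverse.edges := by
        rw [Walk.edges_reverse, List.mem_reverse]
        intro h
        exact hnq (q'.fst_mem_support_of_mem_edges h)
      have hdrme : s(m1, m2) ∉ (p.dropUntil m1 hm1).edges := fun h => hdisjE hmem h
      obtain ⟨q1, hq1s, hq1e⟩ := G'toG hm12 q'.reverse hq'me
      obtain ⟨q2, hq2s, hq2e⟩ := G'toG hm12 (p.dropUntil m1 hm1) hdrme
      refine ⟨m2, m1, Or.inr ⟨rfl, rfl⟩, q1, q2, ?_, ?_, ?_, ?_⟩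
      · rw [hq1s, Walk.support_reverse]
        intro t ht
        rw [List.mem_reverse] at ht
        exact Walk.support_takeUntil_subset _ _ (hq'sub ht)
      · rw [hq2s]; exact Walk.support_dropUntil_subset _ _
      · rw [hq1e]
        intro e he
        rw [Walk.edges_reverse, List.mem_reverse] at he
        exact Walk.edges_takeUntil_subset _ _ (hq'edges he)
      · rw [hq2e]; exact Walk.edges_dropUntil_subset _ _
    · -- the m-edge is in the suffix starting at m1
      obtain ⟨hadj, q2', heq, hnq⟩ := firstEdge _ (hp.dropUntil hm1) hmem
      have htme : s(m1, m2) ∉ (p.takeUntil m1 hm1).edges := fun h => hdisjE h hmem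
      have hq2'me : s(m1, m2) ∉ q2'.edges := by
        intro h
        exact hnq (q2'.fst_mem_support_of_mem_edges h)
      obtain ⟨q1, hq1s, hq1e⟩ := G'toG hm12 (p.takeUntil m1 hm1) htme
      obtain ⟨q2, hq2s, hq2e⟩ := G'toG hm12 q2' hq2'me
      refine ⟨m1, m2, Or.inl ⟨rfl, rfl⟩, q1, q2, ?_, ?_, ?_, ?_⟩
      · rw [hq1s]; exact Walk.support_takeUntil_subset _ _
      · rw [hq2s]
        intro t ht
        apply Walk.support_dropUntil_subset p hm1
        rw [heq, Walk.support_cons]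
        exact List.mem_cons_of_mem _ ht
      · rw [hq1e]; exact Walk.edges_takeUntil_subset _ _
      · rw [hq2e]
        intro e he
        apply Walk.edges_dropUntil_subset p hm1
        rw [heq, Walk.edges_cons]
        exact List.mem_cons_of_mem _ he
  · left
    obtain ⟨q, hqs, hqe⟩ := G'toG hm12 p hme
    exact ⟨q, by rw [hqs]; exact fun _ h => h, by rw [hqe]; exact fun _ h => h⟩

end TwoCyclesAux

namespace TwoCyclesAux
open SimpleGraph Walk

variable {V : Type*} [Fintype V] [DecidableEq V]
variable {G : SimpleGraph V} {m1 m2 v w : V} {H : SimpleGraph V}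

lemma not_mem_append {K : SimpleGraph V} {a b c z : V} {p : K.Walk a b} {q : K.Walk b c}
    (h1 : z ∉ p.support) (h2 : z ∉ q.support) : z ∉ (p.append q).support := by
  rw [Walk.mem_support_append_iff]
  rintro (h | h)
  · exact h1 h
  · exact h2 h

lemma not_mem_reverse {K : SimpleGraph V} {a b z : V} {p : K.Walk a b}
    (h1 : z ∉ p.support) : z ∉ p.reverse.support := by
  rwa [Walk.support_reverse, List.mem_reverse]

lemma cut_disjoint {z : V}
    (hcut : ∀ p : H.Walk v w, z ∈ p.support) :
    ∀ y, (∃ p : H.Walk v y, z ∉ p.support) → (∃ q : H.Walk w y, z ∉ q.support) → False := by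
  rintro y ⟨p, hp⟩ ⟨q, hq⟩
  exact not_mem_append hp (not_mem_reverse hq) (hcut (p.append q.reverse))

lemma walk_prefix_avoid {K : SimpleGraph V} {a y z : V} (p : K.Walk a y)
    (hz : z ∉ p.support) : ∀ t ∈ p.support, ∃ r : K.Walk a t, z ∉ r.support :=
  fun t ht => ⟨p.takeUntil t ht, fun h => hz (Walk.support_takeUntil_subset _ _ h)⟩

lemma oneCutFacts
    (hm12 : m1 ≠ m2) (hvw : G.Adj v w)
    (hvm1 : v ≠ m1) (hvm2 : v ≠ m2) (hwm1 : w ≠ m1) (hwm2 : w ≠ m2)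
    (h3 : KVertexConnected (G ⊔ SimpleGraph.fromEdgeSet {s(m1, m2)}) 3)
    (hHadj : ∀ a b, H.Adj a b ↔ G.Adj a b ∧ s(a, b) ≠ s(v, w))
    {z : V} (hzv : z ≠ v) (hzw : z ≠ w)
    (hcut : ∀ p : H.Walk v w, z ∈ p.support) :
    (z ≠ m1 ∧ z ≠ m2) ∧
    ((∃ p : H.Walk v m1, z ∉ p.support) ∧ (∃ p : H.Walk w m2, z ∉ p.support) ∨
     (∃ p : H.Walk v m2, z ∉ p.support) ∧ (∃ p : H.Walk w m1, z ∉ p.support)) ∧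
    (∀ y, y ≠ z →
      (∃ p : H.Walk v y, z ∉ p.support) ∨ (∃ p : H.Walk w y, z ∉ p.support)) := by
  have hvwne : v ≠ w := hvw.ne
  have hdisj := cut_disjoint (v := v) (w := w) (H := H) hcut
  -- z is not a monitor
  have hzm1 : z ≠ m1 := by
    rintro rfl
    obtain ⟨p, hp, hzp, hvp⟩ := h3walk h3 z v w m2
      hzw.symm hvwne.symm hm12.symm hvm2.symm
    obtain ⟨q, hqs, _⟩ := G'toG_of_not_support hm12 p (Or.inl hzp)
    obtain ⟨r, hrs, _⟩ := GtoH hHadj q (Or.inl (by rw [hqs]; exact hvp))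
    have hW : ∃ r : H.Walk w m2, z ∉ r.support := ⟨r, by rw [hrs, hqs]; exact hzp⟩
    obtain ⟨p', hp', hzp', hwp'⟩ := h3walk h3 z w v m2
      hzv.symm hvwne hm12.symm hwm2.symm
    obtain ⟨q', hqs', _⟩ := G'toG_of_not_support hm12 p' (Or.inl hzp')
    obtain ⟨r', hrs', _⟩ := GtoH hHadj q' (Or.inr (by rw [hqs']; exact hwp'))
    exact hdisj m2 ⟨r', by rw [hrs', hqs']; exact hzp'⟩ hW
  have hzm2 : z ≠ m2 := by
    rintro rfl
    obtain ⟨p, hp, hzp, hvp⟩ := h3walk h3 z v w m1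
      hzw.symm hvwne.symm hm12 hvm1.symm
    obtain ⟨q, hqs, _⟩ := G'toG_of_not_support hm12 p (Or.inr hzp)
    obtain ⟨r, hrs, _⟩ := GtoH hHadj q (Or.inl (by rw [hqs]; exact hvp))
    have hW : ∃ r : H.Walk w m1, z ∉ r.support := ⟨r, by rw [hrs, hqs]; exact hzp⟩
    obtain ⟨p', hp', hzp', hwp'⟩ := h3walk h3 z w v m1
      hzv.symm hvwne hm12 hwm1.symm
    obtain ⟨q', hqs', _⟩ := G'toG_of_not_support hm12 p' (Or.inr hzp')
    obtain ⟨r', hrs', _⟩ := GtoH hHadj q' (Or.inr (by rw [hqs']; exact hwp'))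
    exact hdisj m1 ⟨r', by rw [hrs', hqs']; exact hzp'⟩ hW
  -- monitors are split by z
  have hB1 : (∃ r : H.Walk w m1, z ∉ r.support) ∨ (∃ r : H.Walk w m2, z ∉ r.support) := by
    obtain ⟨p, hp, hzp, hvp⟩ := h3walk h3 z v w m1
      hzw.symm hvwne.symm hzm1.symm hvm1.symm
    by_cases hme : s(m1, m2) ∈ p.edges
    · right
      have hrev : s(m1, m2) ∈ p.reverse.edges := by
        rw [Walk.edges_reverse, List.mem_reverse]; exact hme
      obtain ⟨hadj, q', heq, hnq⟩ := firstEdge _ hp.reverse hrev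
      have hq'sub : q'.support ⊆ p.support := by
        intro t ht
        have : t ∈ p.reverse.support := by
          rw [heq, Walk.support_cons]; exact List.mem_cons_of_mem _ ht
        rwa [Walk.support_reverse, List.mem_reverse] at this
      have hq'me : s(m1, m2) ∉ q'.edges := fun h =>
        hnq (q'.fst_mem_support_of_mem_edges h)
      obtain ⟨g, hgs, _⟩ := G'toG hm12 q' hq'me
      obtain ⟨r, hrs, _⟩ := GtoH hHadj g
        (Or.inl (by rw [hgs]; exact fun h => hvp (hq'sub h)))
      have hzr : z ∉ r.support := by
        rw [hrs, hgs]
        exact fun h => hzp (hq'sub h)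
      exact ⟨r.reverse, not_mem_reverse hzr⟩
    · left
      obtain ⟨q, hqs, _⟩ := G'toG hm12 p hme
      obtain ⟨r, hrs, _⟩ := GtoH hHadj q (Or.inl (by rw [hqs]; exact hvp))
      exact ⟨r, by rw [hrs, hqs]; exact hzp⟩
  have hB2 : (∃ r : H.Walk v m1, z ∉ r.support) ∨ (∃ r : H.Walk v m2, z ∉ r.support) := by
    obtain ⟨p, hp, hzp, hwp⟩ := h3walk h3 z w v m1
      hzv.symm hvwne hzm1.symm hwm1.symm
    by_cases hme : s(m1, m2) ∈ p.edges
    · right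
      have hrev : s(m1, m2) ∈ p.reverse.edges := by
        rw [Walk.edges_reverse, List.mem_reverse]; exact hme
      obtain ⟨hadj, q', heq, hnq⟩ := firstEdge _ hp.reverse hrev
      have hq'sub : q'.support ⊆ p.support := by
        intro t ht
        have : t ∈ p.reverse.support := by
          rw [heq, Walk.support_cons]; exact List.mem_cons_of_mem _ ht
        rwa [Walk.support_reverse, List.mem_reverse] at this
      have hq'me : s(m1, m2) ∉ q'.edges := fun h =>
        hnq (q'.fst_mem_support_of_mem_edges h)
      obtain ⟨g, hgs, _⟩ := G'toG hm12 q' hq'me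
      obtain ⟨r, hrs, _⟩ := GtoH hHadj g
        (Or.inr (by rw [hgs]; exact fun h => hwp (hq'sub h)))
      have hzr : z ∉ r.support := by
        rw [hrs, hgs]
        exact fun h => hzp (hq'sub h)
      exact ⟨r.reverse, not_mem_reverse hzr⟩
    · left
      obtain ⟨q, hqs, _⟩ := G'toG hm12 p hme
      obtain ⟨r, hrs, _⟩ := GtoH hHadj q (Or.inr (by rw [hqs]; exact hwp))
      exact ⟨r, by rw [hrs, hqs]; exact hzp⟩
  have hsplit : (∃ p : H.Walk v m1, z ∉ p.support) ∧ (∃ p : H.Walk w m2, z ∉ p.support) ∨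
      (∃ p : H.Walk v m2, z ∉ p.support) ∧ (∃ p : H.Walk w m1, z ∉ p.support) := by
    rcases hB1 with h1 | h1 <;> rcases hB2 with h2 | h2
    · exact absurd h1 (fun h => hdisj m1 h2 h)
    · exact Or.inr ⟨h2, h1⟩
    · exact Or.inl ⟨h2, h1⟩
    · exact absurd h1 (fun h => hdisj m2 h2 h)
  refine ⟨⟨hzm1, hzm2⟩, hsplit, ?_⟩
  intro y hyz
  by_cases hyv : y = v
  · subst hyv
    exact Or.inl ⟨Walk.nil, by simpa using hzv⟩
  by_cases hyw : y = w
  · subst hyw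
    exact Or.inr ⟨Walk.nil, by simpa using hzw⟩
  obtain ⟨p, hp, hzp, hvp⟩ := h3walk h3 z v w y
    hzw.symm hvwne.symm hyz (fun h => hyv h)
  rcases decompose hm12 p hp with ⟨q, hqs, _⟩ | ⟨c', d', hcd, q1, q2, hs1, hs2, he1, he2⟩
  · obtain ⟨r, hrs, _⟩ := GtoH hHadj q (Or.inl (fun h => hvp (hqs h)))
    exact Or.inr ⟨r, by rw [hrs]; exact fun h => hzp (hqs h)⟩
  · obtain ⟨r2, hrs2, _⟩ := GtoH hHadj q2 (Or.inl (fun h => hvp (hs2 h)))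
    have hr2z : z ∉ r2.support := by rw [hrs2]; exact fun h => hzp (hs2 h)
    rcases hcd with ⟨hc', hd'⟩ | ⟨hc', hd'⟩
    · subst hd'
      rcases hsplit with ⟨_, hm2w⟩ | ⟨hm2v, _⟩
      · obtain ⟨s, hs⟩ := hm2w
        exact Or.inr ⟨s.append r2, not_mem_append hs hr2z⟩
      · obtain ⟨s, hs⟩ := hm2v
        exact Or.inl ⟨s.append r2, not_mem_append hs hr2z⟩
    · subst hd'
      rcases hsplit with ⟨hm1v, _⟩ | ⟨_, hm1w⟩
      · obtain ⟨s, hs⟩ := hm1v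
        exact Or.inl ⟨s.append r2, not_mem_append hs hr2z⟩
      · obtain ⟨s, hs⟩ := hm1w
        exact Or.inr ⟨s.append r2, not_mem_append hs hr2z⟩

end TwoCyclesAux

namespace TwoCyclesAux
open SimpleGraph Walk

variable {V : Type*} [Fintype V] [DecidableEq V]
variable {G : SimpleGraph V} {m1 m2 v w : V} {H : SimpleGraph V}

/-- There cannot be two distinct cut vertices separating `v` from `w` in `H = G - vw`. -/
lemma auxTwoCut
    (hm12 : m1 ≠ m2) (hvw : G.Adj v w)
    (hvm1 : v ≠ m1) (hvm2 : v ≠ m2) (hwm1 : w ≠ m1) (hwm2 : w ≠ m2)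
    (h3 : KVertexConnected (G ⊔ SimpleGraph.fromEdgeSet {s(m1, m2)}) 3)
    (hHadj : ∀ a b, H.Adj a b ↔ G.Adj a b ∧ s(a, b) ≠ s(v, w))
    (hbr : ∀ a b : V, ∃ t : H.Walk v w, t.IsPath ∧ s(a, b) ∉ t.edges)
    {z1 z2 : V} (hz1v : z1 ≠ v) (hz1w : z1 ≠ w) (hz2v : z2 ≠ v) (hz2w : z2 ≠ w)
    (h12 : z1 ≠ z2)
    (hcut1 : ∀ p : H.Walk v w, z1 ∈ p.support)
    (hcut2 : ∀ p : H.Walk v w, z2 ∈ p.support)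
    (hA : ∃ p : H.Walk v z1, z2 ∉ p.support)
    (hB : ∃ q : H.Walk z2 w, z1 ∉ q.support) : False := by
  have hd2 := cut_disjoint (v := v) (w := w) (H := H) hcut2
  have hz1W2 : ¬ ∃ q : H.Walk w z1, z2 ∉ q.support := fun h => hd2 z1 hA h
  have hz2U1 : ¬ ∃ p : H.Walk v z2, z1 ∉ p.support := by
    rintro ⟨p, hp⟩
    obtain ⟨q, hq⟩ := hB
    exact not_mem_append hp hq (hcut1 (p.append q))
  obtain ⟨⟨h1m1, h1m2⟩, hsplit1, hside1⟩ :=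
    oneCutFacts hm12 hvw hvm1 hvm2 hwm1 hwm2 h3 hHadj hz1v hz1w hcut1
  obtain ⟨⟨h2m1, h2m2⟩, hsplit2, hside2⟩ :=
    oneCutFacts hm12 hvw hvm1 hvm2 hwm1 hwm2 h3 hHadj hz2v hz2w hcut2
  have hstrength : ∀ (ma : V), (∃ p : H.Walk v ma, z1 ∉ p.support) →
      ∃ p : H.Walk v ma, z1 ∉ p.support ∧ z2 ∉ p.support := by
    rintro ma ⟨p, hp⟩
    by_cases h : z2 ∈ p.support
    · exact absurd (walk_prefix_avoid p hp z2 h) hz2U1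
    · exact ⟨p, hp, h⟩
  obtain ⟨ma, mb, hmm, hvma, hwmb⟩ : ∃ ma mb : V,
      ((ma = m1 ∧ mb = m2) ∨ (ma = m2 ∧ mb = m1)) ∧
      (∃ p : H.Walk v ma, z1 ∉ p.support ∧ z2 ∉ p.support) ∧
      (∃ q : H.Walk w mb, z2 ∉ q.support) := by
    rcases hsplit1 with ⟨hU, _⟩ | ⟨hU, _⟩
    · obtain ⟨p, hp1, hp2⟩ := hstrength m1 hU
      rcases hsplit2 with ⟨_, h2W⟩ | ⟨_, h2W⟩
      · exact ⟨m1, m2, Or.inl ⟨rfl, rfl⟩, ⟨p, hp1, hp2⟩, h2W⟩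
      · exact absurd h2W (fun h => hd2 m1 ⟨p, hp2⟩ h)
    · obtain ⟨p, hp1, hp2⟩ := hstrength m2 hU
      rcases hsplit2 with ⟨_, h2W⟩ | ⟨_, h2W⟩
      · exact absurd h2W (fun h => hd2 m2 ⟨p, hp2⟩ h)
      · exact ⟨m2, m1, Or.inr ⟨rfl, rfl⟩, ⟨p, hp1, hp2⟩, h2W⟩
  -- every vertex other than z1, z2 is either on the v-side of z1 or the w-side of z2
  have hregion : ∀ y, y ≠ z1 → y ≠ z2 →
      (∃ p : H.Walk v y, z1 ∉ p.support) ∨ (∃ q : H.Walk w y, z2 ∉ q.support) := by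
    intro y hy1 hy2
    by_cases hyv : y = v
    · subst hyv; exact Or.inl ⟨Walk.nil, by simpa using hz1v⟩
    by_cases hyw : y = w
    · subst hyw; exact Or.inr ⟨Walk.nil, by simpa using hz2w⟩
    have hcompose : ∀ (d' : V), (d' = m1 ∧ True) ∨ (d' = m2 ∧ True) →
        (∃ r2 : H.Walk d' y, z1 ∉ r2.support ∧ z2 ∉ r2.support) →
        (∃ p : H.Walk v y, z1 ∉ p.support) ∨ (∃ q : H.Walk w y, z2 ∉ q.support) := by
      rintro d' hd' ⟨r2, hr1, hr2⟩
      have hdm : d' = ma ∨ d' = mb := by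
        rcases hd' with ⟨rfl, _⟩ | ⟨rfl, _⟩ <;> rcases hmm with ⟨h1, h2⟩ | ⟨h1, h2⟩
        · exact Or.inl h1.symm
        · exact Or.inr h2.symm
        · exact Or.inr h2.symm
        · exact Or.inl h1.symm
      rcases hdm with rfl | rfl
      · obtain ⟨p, hp1, _⟩ := hvma
        exact Or.inl ⟨p.append r2, not_mem_append hp1 hr1⟩
      · obtain ⟨q, hq⟩ := hwmb
        exact Or.inr ⟨q.append r2, not_mem_append hq hr2⟩
    obtain ⟨p, hp, h1p, h2p⟩ := h3walk h3 z1 z2 v y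
      hz1v.symm hz2v.symm hy1 hy2
    by_cases hevw : s(v, w) ∈ p.edges
    · obtain ⟨hadj, tail, heq, hvtail⟩ := firstEdge p hp hevw
      have hp' := hp
      rw [heq, Walk.cons_isPath_iff] at hp'
      have htsub : tail.support ⊆ p.support := by
        intro t ht
        rw [heq, Walk.support_cons]
        exact List.mem_cons_of_mem _ ht
      have htesub : tail.edges ⊆ p.edges := by
        intro e he
        rw [heq, Walk.edges_cons]
        exact List.mem_cons_of_mem _ he
      rcases decompose hm12 tail hp'.1 with ⟨q, hs, he⟩ |
        ⟨c', d', hcd, q1, q2, hs1, hs2, he1, he2⟩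
      · obtain ⟨r, hrs, _⟩ := GtoH hHadj q (Or.inl (fun h => hp'.2 (hs h)))
        refine Or.inr ⟨r, ?_⟩
        rw [hrs]
        exact fun h => h2p (htsub (hs h))
      · obtain ⟨r2, hrs2, _⟩ := GtoH hHadj q2 (Or.inl (fun h => hp'.2 (hs2 h)))
        apply hcompose d'
        · rcases hcd with ⟨_, rfl⟩ | ⟨_, rfl⟩
          · exact Or.inr ⟨rfl, trivial⟩
          · exact Or.inl ⟨rfl, trivial⟩
        · refine ⟨r2, ?_, ?_⟩ <;> rw [hrs2]
          · exact fun h => h1p (htsub (hs2 h))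
          · exact fun h => h2p (htsub (hs2 h))
    · rcases decompose hm12 p hp with ⟨q, hs, he⟩ |
        ⟨c', d', hcd, q1, q2, hs1, hs2, he1, he2⟩
      · obtain ⟨r, hrs, _⟩ := GtoH_edges hHadj q (fun h => hevw (he h))
        refine Or.inl ⟨r, ?_⟩
        rw [hrs]
        exact fun h => h1p (hs h)
      · obtain ⟨r2, hrs2, _⟩ := GtoH_edges hHadj q2 (fun h => hevw (he2 h))
        apply hcompose d'
        · rcases hcd with ⟨_, rfl⟩ | ⟨_, rfl⟩
          · exact Or.inr ⟨rfl, trivial⟩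
          · exact Or.inl ⟨rfl, trivial⟩
        · refine ⟨r2, ?_, ?_⟩ <;> rw [hrs2]
          · exact fun h => h1p (hs2 h)
          · exact fun h => h2p (hs2 h)
  -- final contradiction via 2-edge-connectivity
  obtain ⟨t0, ht0path, ht0e⟩ := hbr z1 z2
  have hz1t := hcut1 t0
  rcases hdd : t0.dropUntil z1 hz1t with _ | ⟨hadjz, d2⟩
  · exact hz1w rfl
  · rename_i y
    have hyz1 : y ≠ z1 := hadjz.ne'
    have hyz2 : y ≠ z2 := by
      rintro rfl
      apply ht0e
      apply Walk.edges_dropUntil_subset t0 hz1t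
      rw [hdd, Walk.edges_cons]
      exact List.mem_cons_self
    have hdpath : (t0.dropUntil z1 hz1t).IsPath := ht0path.dropUntil hz1t
    rw [hdd, Walk.cons_isPath_iff] at hdpath
    rcases hregion y hyz1 hyz2 with ⟨py, hpy⟩ | ⟨qy, hqy⟩
    · exact not_mem_append hpy hdpath.2 (hcut1 (py.append d2))
    · apply hz1W2
      refine ⟨qy.append (Walk.cons hadjz.symm Walk.nil), not_mem_append hqy ?_⟩
      rw [Walk.support_cons, Walk.support_nil]
      intro h
      rcases List.mem_cons.mp h with rfl | h
      · exact hyz2 rfl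
      · rcases List.mem_singleton.mp h with rfl
        exact h12 rfl

end TwoCyclesAux

namespace TwoCyclesAux
open SimpleGraph Walk

variable {V : Type*} [DecidableEq V]

lemma order_two_cuts {K : SimpleGraph V} {a b z1 z2 : V} (t : K.Walk a b) (ht : t.IsPath)
    (h1 : z1 ∈ t.support) (h2 : z2 ∈ t.support) (h12 : z1 ≠ z2) :
    ((∃ p : K.Walk a z1, z2 ∉ p.support) ∧ ∃ q : K.Walk z2 b, z1 ∉ q.support) ∨
    ((∃ p : K.Walk a z2, z1 ∉ p.support) ∧ ∃ q : K.Walk z1 b, z2 ∉ q.support) := by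
  by_cases hc : z2 ∈ (t.takeUntil z1 h1).support
  · right
    constructor
    · exact ⟨(t.takeUntil z1 h1).takeUntil z2 hc,
        endpoint_not_mem_takeUntil (ht.takeUntil h1) hc h12.symm⟩
    · exact ⟨t.dropUntil z1 h1,
        fun h => h12.symm (mem_takeUntil_mem_dropUntil ht h1 hc h)⟩
  · left
    constructor
    · exact ⟨t.takeUntil z1 h1, hc⟩
    · have hz2d : z2 ∈ (t.dropUntil z1 h1).support := by
        have h2' := h2
        rw [← t.take_spec h1, Walk.mem_support_append_iff] at h2'
        rcases h2' with h | h
        · exact absurd h hc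
        · exact h
      exact ⟨(t.dropUntil z1 h1).dropUntil z2 hz2d,
        start_not_mem_dropUntil (ht.dropUntil h1) hz2d h12.symm⟩

end TwoCyclesAux

set_option maxHeartbeats 1000000 in
open SimpleGraph Walk TwoCyclesAux in
/-- If G + m1m2 is 3-vertex-connected and vw is an interior link with
G − vw 2-edge-connected, then there exist two cycles both containing the edge vw and
sharing at most 3 vertices. -/
theorem two_cycles_through_interior_link {V : Type*} [Fintype V] [DecidableEq V]
    (G : SimpleGraph V) (hG : G.Connected)
    (m1 m2 : V) (hm : m1 ≠ m2) (hnadj : ¬ G.Adj m1 m2)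
    (h3 : KVertexConnected (G ⊔ SimpleGraph.fromEdgeSet {s(m1, m2)}) 3)
    (v w : V) (hvw : G.Adj v w)
    (hint : v ≠ m1 ∧ v ≠ m2 ∧ w ≠ m1 ∧ w ≠ m2)
    (h2e : KEdgeConnected (G.deleteEdges {s(v, w)}) 2) :
    ∃ (a b : V) (C1 : G.Walk a a) (C2 : G.Walk b b),
      C1.IsCycle ∧ C2.IsCycle ∧ s(v, w) ∈ C1.edges ∧ s(v, w) ∈ C2.edges ∧
      (C1.support.toFinset ∩ C2.support.toFinset).card ≤ 3 := by
  classical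
  obtain ⟨hv1, hv2, hw1, hw2⟩ := hint
  set H := G.deleteEdges {s(v, w)} with hHdef
  have hHadj : ∀ a b, H.Adj a b ↔ G.Adj a b ∧ s(a, b) ≠ s(v, w) := by
    intro a b
    rw [hHdef, SimpleGraph.deleteEdges_adj]
    simp only [Set.mem_singleton_iff]
  have hvwne : v ≠ w := hvw.ne
  have hHG : ∀ {c d : V} (p : H.Walk c d), ∀ e ∈ p.edges, e ∈ G.edgeSet := by
    intro c d p e he
    have h := p.edges_subset_edgeSet he
    rw [hHdef, SimpleGraph.edgeSet_deleteEdges] at h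
    exact h.1
  have hHvw : ∀ {c d : V} (p : H.Walk c d), s(v, w) ∉ p.edges := by
    intro c d p h
    have h' := p.edges_subset_edgeSet h
    rw [hHdef, SimpleGraph.edgeSet_deleteEdges] at h'
    exact h'.2 rfl
  -- 2-edge-connectivity: paths from v to w avoiding any single edge
  have hbr : ∀ a b : V, ∃ t : H.Walk v w, t.IsPath ∧ s(a, b) ∉ t.edges := by
    intro a b
    have hcard : ({s(a, b)} : Finset (Sym2 V)).card < 2 := by simp
    have hconn := h2e.2 {s(a, b)} hcard
    obtain ⟨W⟩ := hconn.preconnected v w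
    have hWedges : ∀ e ∈ W.bypass.edges, e ∈ H.edgeSet ∧ e ∉ ({s(a, b)} : Set (Sym2 V)) := by
      intro e he
      have h := W.bypass.edges_subset_edgeSet he
      rw [SimpleGraph.edgeSet_deleteEdges] at h
      exact ⟨h.1, by simpa using h.2⟩
    refine ⟨W.bypass.transfer H (fun e he => (hWedges e he).1),
      (W.bypass_isPath).transfer _, ?_⟩
    rw [W.bypass.edges_transfer]
    intro h
    exact (hWedges _ h).2 rfl
  -- building a cycle through vw from an H-path
  have mkCycle : ∀ (r : H.Walk v w), r.IsPath →
      ∃ C : G.Walk w w, C.IsCycle ∧ s(v, w) ∈ C.edges ∧ C.support = w :: r.support := by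
    intro r hr
    refine ⟨Walk.cons hvw.symm (r.transfer G (hHG r)), ?_, ?_, ?_⟩
    · rw [Walk.cons_isCycle_iff]
      refine ⟨hr.transfer _, ?_⟩
      rw [r.edges_transfer (hHG r)]
      intro h
      rw [Sym2.eq_swap] at h
      exact hHvw r h
    · rw [Walk.edges_cons, Sym2.eq_swap]
      exact List.mem_cons_self
    · rw [Walk.support_cons, r.support_transfer (hHG r)]
  by_cases hNC : ∀ x : V, x ≠ v → x ≠ w → ∃ p : H.Walk v w, x ∉ p.support
  · -- no cut vertex: two internally disjoint v-w paths
    obtain ⟨t00, ht00, _⟩ := hbr v v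
    obtain ⟨p, q, hp, hq, _, _, hint2⟩ := sideWhitney H v w hvwne (fun p => p.IsPath)
      (fun _ hp => hp) ⟨t00, ht00⟩ (fun x hxv hxw => by
        obtain ⟨p, hxp⟩ := hNC x hxv hxw
        exact ⟨p.bypass, p.bypass_isPath, fun h => hxp (p.support_bypass_subset h)⟩)
    obtain ⟨C1, hC1c, hC1e, hC1s⟩ := mkCycle p hp
    obtain ⟨C2, hC2c, hC2e, hC2s⟩ := mkCycle q hq
    refine ⟨w, w, C1, C2, hC1c, hC2c, hC1e, hC2e, ?_⟩
    have hsub : C1.support.toFinset ∩ C2.support.toFinset ⊆ {v, w} := by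
      intro x hx
      rw [Finset.mem_inter, List.mem_toFinset, List.mem_toFinset, hC1s, hC2s] at hx
      obtain ⟨hx1, hx2⟩ := hx
      rcases List.mem_cons.mp hx1 with rfl | hx1
      · simp
      rcases List.mem_cons.mp hx2 with rfl | hx2
      · simp
      rcases hint2 x hx1 hx2 with rfl | rfl <;> simp
    calc (C1.support.toFinset ∩ C2.support.toFinset).card
        ≤ ({v, w} : Finset V).card := Finset.card_le_card hsub
      _ ≤ 2 := (Finset.card_insert_le _ _).trans (by simp)
      _ ≤ 3 := by omega
  · -- there is a cut vertex z
    push_neg at hNC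
    obtain ⟨z, hzv, hzw, hcut⟩ := hNC
    have hdisj := cut_disjoint (v := v) (w := w) (H := H) hcut
    obtain ⟨t0, ht0, _⟩ := hbr v v
    have hzt0 := hcut t0
    -- the aux contradiction: no second cut vertex
    have haux : ∀ x, x ≠ v → x ≠ w → x ≠ z →
        (∀ q : H.Walk v w, x ∈ q.support) → False := by
      intro x hxv hxw hxz hxcut
      rcases order_two_cuts t0 ht0 hzt0 (hxcut t0) (Ne.symm hxz) with ⟨hA, hB⟩ | ⟨hA, hB⟩
      · exact auxTwoCut hm hvw hv1 hv2 hw1 hw2 h3 hHadj hbr hzv hzw hxv hxw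
          (Ne.symm hxz) hcut hxcut hA hB
      · exact auxTwoCut hm hvw hv1 hv2 hw1 hw2 h3 hHadj hbr hxv hxw hzv hzw
          hxz hxcut hcut hA hB
    -- good path families on the two sides of z
    have hGoodA : ∀ (t : H.Walk v w) (htp : t.IsPath) (hzt : z ∈ t.support),
        (t.takeUntil z hzt).IsPath ∧ ∀ y ∈ (t.takeUntil z hzt).support, y ≠ z →
          ∃ r : H.Walk v y, z ∉ r.support := by
      intro t htp hzt
      exact ⟨htp.takeUntil hzt, fun y hy hyz =>
        ⟨(t.takeUntil z hzt).takeUntil y hy,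
          endpoint_not_mem_takeUntil (htp.takeUntil hzt) hy hyz⟩⟩
    have hGoodB : ∀ (t : H.Walk v w) (htp : t.IsPath) (hzt : z ∈ t.support),
        (t.dropUntil z hzt).IsPath ∧ ∀ y ∈ (t.dropUntil z hzt).support, y ≠ z →
          ∃ r : H.Walk w y, z ∉ r.support := by
      intro t htp hzt
      refine ⟨htp.dropUntil hzt, fun y hy hyz => ?_⟩
      refine ⟨((t.dropUntil z hzt).dropUntil y hy).reverse, not_mem_reverse ?_⟩
      exact start_not_mem_dropUntil (htp.dropUntil hzt) hy hyz
    -- the v-side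
    obtain ⟨A1, A2, hA1p, hA2p, hA1m, hA2m, hintA⟩ := sideWhitney H v z (Ne.symm hzv)
      (fun p => p.IsPath ∧ ∀ y ∈ p.support, y ≠ z → ∃ r : H.Walk v y, z ∉ r.support)
      (fun _ hp => hp.1) ⟨t0.takeUntil z hzt0, hGoodA t0 ht0 hzt0⟩
      (fun x hxv hxz => by
        by_cases hxw : x = w
        · subst hxw
          exact ⟨t0.takeUntil z hzt0, hGoodA t0 ht0 hzt0,
            endpoint_not_mem_takeUntil ht0 hzt0 hzw⟩
        · by_contra hall
          push_neg at hall
          refine haux x hxv hxw hxz (fun q => ?_)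
          have hzq : z ∈ q.bypass.support := hcut q.bypass
          have hx := hall (q.bypass.takeUntil z hzq) (hGoodA q.bypass q.bypass_isPath hzq)
          exact q.support_bypass_subset (Walk.support_takeUntil_subset _ _ hx))
    -- the w-side
    obtain ⟨B1, B2, hB1p, hB2p, hB1m, hB2m, hintB⟩ := sideWhitney H z w hzw
      (fun p => p.IsPath ∧ ∀ y ∈ p.support, y ≠ z → ∃ r : H.Walk w y, z ∉ r.support)
      (fun _ hp => hp.1) ⟨t0.dropUntil z hzt0, hGoodB t0 ht0 hzt0⟩
      (fun x hxz hxw => by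
        by_cases hxv : x = v
        · subst hxv
          exact ⟨t0.dropUntil z hzt0, hGoodB t0 ht0 hzt0,
            start_not_mem_dropUntil ht0 hzt0 hzv⟩
        · by_contra hall
          push_neg at hall
          refine haux x hxv hxw hxz (fun q => ?_)
          have hzq : z ∈ q.bypass.support := hcut q.bypass
          have hx := hall (q.bypass.dropUntil z hzq) (hGoodB q.bypass q.bypass_isPath hzq)
          exact q.support_bypass_subset (Walk.support_dropUntil_subset _ _ hx))
    have hA1U : ∀ y ∈ A1.support, y ≠ z → ∃ r : H.Walk v y, z ∉ r.support := by
      intro y hy hyz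
      obtain ⟨g, hg, hyg⟩ := hA1m y hy
      exact hg.2 y hyg hyz
    have hA2U : ∀ y ∈ A2.support, y ≠ z → ∃ r : H.Walk v y, z ∉ r.support := by
      intro y hy hyz
      obtain ⟨g, hg, hyg⟩ := hA2m y hy
      exact hg.2 y hyg hyz
    have hB1W : ∀ y ∈ B1.support, y ≠ z → ∃ r : H.Walk w y, z ∉ r.support := by
      intro y hy hyz
      obtain ⟨g, hg, hyg⟩ := hB1m y hy
      exact hg.2 y hyg hyz
    have hB2W : ∀ y ∈ B2.support, y ≠ z → ∃ r : H.Walk w y, z ∉ r.support := by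
      intro y hy hyz
      obtain ⟨g, hg, hyg⟩ := hB2m y hy
      exact hg.2 y hyg hyz
    have hmid : ∀ (Ai : H.Walk v z) (Bi : H.Walk z w),
        (∀ y ∈ Ai.support, y ≠ z → ∃ r : H.Walk v y, z ∉ r.support) →
        (∀ y ∈ Bi.support, y ≠ z → ∃ r : H.Walk w y, z ∉ r.support) →
        ∀ x ∈ Ai.support, x ∈ Bi.support → x = z := by
      intro Ai Bi hAi hBi x hx1 hx2
      by_contra hxz
      exact hdisj x (hAi x hx1 hxz) (hBi x hx2 hxz)
    have hP1 : (A1.append B1).IsPath :=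
      isPath_append hA1p hB1p (hmid A1 B1 hA1U hB1W)
    have hP2 : (A2.append B2).IsPath :=
      isPath_append hA2p hB2p (hmid A2 B2 hA2U hB2W)
    obtain ⟨C1, hC1c, hC1e, hC1s⟩ := mkCycle (A1.append B1) hP1
    obtain ⟨C2, hC2c, hC2e, hC2s⟩ := mkCycle (A2.append B2) hP2
    refine ⟨w, w, C1, C2, hC1c, hC2c, hC1e, hC2e, ?_⟩
    have hsub : C1.support.toFinset ∩ C2.support.toFinset ⊆ {v, w, z} := by
      intro x hx
      rw [Finset.mem_inter, List.mem_toFinset, List.mem_toFinset, hC1s, hC2s] at hx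
      obtain ⟨hx1, hx2⟩ := hx
      rcases List.mem_cons.mp hx1 with rfl | hx1
      · simp
      rcases List.mem_cons.mp hx2 with rfl | hx2
      · simp
      rw [Walk.mem_support_append_iff] at hx1 hx2
      rcases hx1 with hx1 | hx1 <;> rcases hx2 with hx2 | hx2
      · rcases hintA x hx1 hx2 with rfl | rfl <;> simp
      · by_cases hxz : x = z
        · subst hxz; simp
        · exact absurd (hdisj x (hA1U x hx1 hxz) (hB2W x hx2 hxz)) not_false
      · by_cases hxz : x = z
        · subst hxz; simp
        · exact absurd (hdisj x (hA2U x hx2 hxz) (hB1W x hx1 hxz)) not_false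
      · rcases hintB x hx1 hx2 with rfl | rfl <;> simp
    calc (C1.support.toFinset ∩ C2.support.toFinset).card
        ≤ ({v, w, z} : Finset V).card := Finset.card_le_card hsub
      _ ≤ 3 := by
        refine (Finset.card_insert_le _ _).trans ?_
        have : ({w, z} : Finset V).card ≤ 2 := (Finset.card_insert_le _ _).trans (by simp)
        omega
end

section
/- Let G be a finite connected simple graph and M ⊆ V(G) a set of monitors with |M| ≥ 3, and let G_ex be the extended graph of G. Then G_ex − e is 2-edge-connected for every edge e ∈ E(G) if and only if G_ex is 3-edge-connected. -/
open SimpleGraph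

lemma ext_adj_inl {V : Type*} (G : SimpleGraph V) (M : Set V) (u v : V) :
    (extendedGraph G M).Adj (Sum.inl u) (Sum.inl v) ↔ G.Adj u v := by
  simp only [extendedGraph, fromRel_adj]
  constructor
  · rintro ⟨-, h | h⟩
    · exact h
    · exact h.symm
  · intro h; exact ⟨by simp [h.ne], Or.inl h⟩

lemma ext_adj_inr {V : Type*} (G : SimpleGraph V) (M : Set V) (m : V) (b : Bool) (hm : m ∈ M) :
    (extendedGraph G M).Adj (Sum.inl m) (Sum.inr b) := by
  simp only [extendedGraph, fromRel_adj]
  exact ⟨by simp, Or.inl hm⟩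

/-- With at least 3 monitors, G_ex − e is 2-edge-connected for every
edge e of G if and only if G_ex is 3-edge-connected. -/
theorem extended_two_edge_connected_iff_three_edge_connected
    {V : Type*} [Fintype V] [DecidableEq V]
    (G : SimpleGraph V) (hG : G.Connected) (M : Finset V) (hM : 3 ≤ M.card) :
    (∀ e ∈ G.edgeSet,
      KEdgeConnected ((extendedGraph G ↑M).deleteEdges {e.map Sum.inl}) 2) ↔
    KEdgeConnected (extendedGraph G ↑M) 3 := by

  have hcard : 2 ≤ Fintype.card (V ⊕ Bool) := by
    simp [Fintype.card_sum]
  constructor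
  · -- forward direction
    intro h
    refine ⟨hcard, ?_⟩
    intro F hF
    by_cases hex : ∃ e ∈ G.edgeSet, e.map Sum.inl ∈ F
    · obtain ⟨e, he, heF⟩ := hex
      have h2 := (h e he).2 (F.erase (e.map Sum.inl)) ?_
      · refine h2.mono ?_
        intro a b
        simp only [deleteEdges_adj, Set.mem_singleton_iff, Finset.coe_erase,
          Set.mem_diff, Finset.mem_coe]
        tauto
      · have := F.card_erase_of_mem heF
        omega
    · push_neg at hex
      rw [connected_iff]
      refine ⟨?_, ⟨Sum.inr true⟩⟩
      -- the inl-copy of G survives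
      have hom : ∀ u v : V, ((extendedGraph G ↑M).deleteEdges ↑F).Reachable
          (Sum.inl u) (Sum.inl v) := by
        intro u v
        have hmap : ∀ a b : V, G.Adj a b →
            ((extendedGraph G ↑M).deleteEdges ↑F).Adj (Sum.inl a) (Sum.inl b) := by
          intro a b hab
          rw [deleteEdges_adj]
          refine ⟨(ext_adj_inl G ↑M a b).2 hab, ?_⟩
          have : (s(Sum.inl a, Sum.inl b) : Sym2 (V ⊕ Bool)) = Sym2.map (Sum.inl : V → V ⊕ Bool) s(a, b) := by
            simp [Sym2.map_pair_eq]
          rw [this]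
          exact_mod_cast hex s(a, b) hab
        exact (hG.preconnected u v).map ⟨(Sum.inl : V → V ⊕ Bool), fun h => hmap _ _ h⟩
      -- each virtual monitor keeps an edge
      have hmon : ∀ b : Bool, ∃ m ∈ M,
          ((extendedGraph G ↑M).deleteEdges ↑F).Adj (Sum.inl m) (Sum.inr b) := by
        intro b
        by_contra hall
        push_neg at hall
        have hsub : M.image (fun m => s(Sum.inl m, (Sum.inr b : V ⊕ Bool))) ⊆ F := by
          intro x hx
          simp only [Finset.mem_image] at hx
          obtain ⟨m, hm, rfl⟩ := hx
          have := hall m hm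
          rw [deleteEdges_adj] at this
          push_neg at this
          exact this (ext_adj_inr G ↑M m b hm)
        have hinj : Set.InjOn (fun m => s(Sum.inl m, (Sum.inr b : V ⊕ Bool))) ↑M := by
          intro x _ y _ hxy
          simp only [Sym2.eq, Sym2.rel_iff', Prod.mk.injEq, Prod.swap_prod_mk,
            Sum.inl.injEq, reduceCtorEq, and_false, false_and, or_false] at hxy
          exact hxy.1
        have := Finset.card_le_card hsub
        rw [Finset.card_image_of_injOn hinj] at this
        omega
      intro x y
      have key : ∀ z : V ⊕ Bool, ∃ u : V,
          ((extendedGraph G ↑M).deleteEdges ↑F).Reachable z (Sum.inl u) := by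
        rintro (u | b)
        · exact ⟨u, Reachable.refl _⟩
        · obtain ⟨m, _, hadj⟩ := hmon b
          exact ⟨m, hadj.symm.reachable⟩
      obtain ⟨u, hu⟩ := key x
      obtain ⟨v, hv⟩ := key y
      exact hu.trans ((hom u v).trans hv.symm)
  · -- reverse direction
    intro h e he
    refine ⟨hcard, ?_⟩
    intro F hF
    have h2 := h.2 (insert (e.map Sum.inl) F) ?_
    · refine h2.mono ?_
      intro a b
      simp only [deleteEdges_adj, Set.mem_singleton_iff, Finset.coe_insert,
        Set.mem_insert_iff, Finset.mem_coe]
      tauto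
    · have := Finset.card_insert_le (e.map Sum.inl) F
      omega
end

section
/- Let G be a finite connected simple graph and M ⊆ V(G) a set of monitors with |M| ≥ 3, and let G_ex be the extended graph of G with added virtual monitors m'1 and m'2. Then G_ex + m'1m'2 (the graph obtained from G_ex by adding the edge m'1m'2) is 3-vertex-connected if and only if G_ex is 3-vertex-connected. -/
open SimpleGraph

lemma connected_of_adj_reachable' {α : Type*} {H₁ H₂ : SimpleGraph α}
    (h : ∀ a b, H₂.Adj a b → H₁.Reachable a b) (hc : H₂.Connected) : H₁.Connected := by
  haveI := hc.nonempty
  refine ⟨fun a b => ?_⟩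
  obtain ⟨p⟩ := hc.preconnected a b
  induction p with
  | nil => exact SimpleGraph.Reachable.refl _
  | cons hadj _ ih => exact (h _ _ hadj).trans ih

/-- With at least 3 monitors, G_ex + m'1m'2 is 3-vertex-connected
if and only if G_ex is 3-vertex-connected. -/
theorem extended_plus_virtual_edge_three_connected_iff
    {V : Type*} [Fintype V] [DecidableEq V]
    (G : SimpleGraph V) (hG : G.Connected) (M : Finset V) (hM : 3 ≤ M.card) :
    KVertexConnected
      ((extendedGraph G ↑M) ⊔
        SimpleGraph.fromEdgeSet {s((Sum.inr false : V ⊕ Bool), (Sum.inr true : V ⊕ Bool))}) 3 ↔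
    KVertexConnected (extendedGraph G ↑M) 3 := by
  constructor
  · rintro ⟨hcard, hconn⟩
    refine ⟨hcard, fun S hS => ?_⟩
    have h2 := hconn S hS
    refine connected_of_adj_reachable' (fun a b hab => ?_) h2
    simp only [comap_adj, Function.Embedding.coe_subtype, sup_adj, fromEdgeSet_adj,
      Set.mem_singleton_iff] at hab
    rcases hab with h | ⟨heq, hne⟩
    · exact SimpleGraph.Adj.reachable (by simpa using h)
    · -- {↑a, ↑b} = {inr false, inr true}; route through a monitor not in S
      have hex : ∃ u ∈ M, Sum.inl u ∉ S := by
        by_contra hcon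
        push_neg at hcon
        have : M.image (Sum.inl : V → V ⊕ Bool) ⊆ S := by
          intro x hx
          simp only [Finset.mem_image] at hx
          obtain ⟨u, hu, rfl⟩ := hx
          exact hcon u hu
        have := Finset.card_le_card this
        rw [Finset.card_image_of_injective _ Sum.inl_injective] at this
        omega
      obtain ⟨u, huM, huS⟩ := hex
      have humem : (Sum.inl u : V ⊕ Bool) ∈ (↑(Sᶜ) : Set (V ⊕ Bool)) := by
        simpa using huS
      set m : ↑(↑(Sᶜ) : Set (V ⊕ Bool)) := ⟨Sum.inl u, humem⟩
      have key : ∀ c : ↑(↑(Sᶜ) : Set (V ⊕ Bool)), (↑c = (Sum.inr false : V ⊕ Bool) ∨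
          ↑c = (Sum.inr true : V ⊕ Bool)) →
          ((extendedGraph G ↑M).induce _).Adj c m := by
        rintro c (hc | hc) <;>
        · simp only [comap_adj, Function.Embedding.coe_subtype, m, hc]
          rw [extendedGraph, fromRel_adj]
          exact ⟨by simp, Or.inr (by simpa using huM)⟩
      rw [Sym2.eq_iff] at heq
      have ha : ((extendedGraph G ↑M).induce _).Adj a m := by
        apply key; rcases heq with ⟨h1, _⟩ | ⟨h1, _⟩
        · exact Or.inl h1
        · exact Or.inr h1
      have hb : ((extendedGraph G ↑M).induce _).Adj b m := by
        apply key; rcases heq with ⟨_, h1⟩ | ⟨_, h1⟩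
        · exact Or.inr h1
        · exact Or.inl h1
      exact ha.reachable.trans hb.reachable.symm
  · rintro ⟨hcard, hconn⟩
    refine ⟨hcard, fun S hS => ?_⟩
    exact (hconn S hS).mono (fun a b hab => by
      simp only [comap_adj, Function.Embedding.coe_subtype] at hab ⊢
      exact Or.inl hab)
end

section
/- Let G be a finite simple graph with two distinguished vertices m1 ≠ m2 (the monitors). Then every edge e of G that is incident to m1 or to m2 and satisfies e ≠ {m1, m2} is unidentifiable. -/
open SimpleGraph

lemma edge_ind_sum_zero {V : Type*} [DecidableEq V] {G : SimpleGraph V} {a b x : V}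
    (p : G.Walk a b) (hx : x ∉ p.support) :
    (p.edges.map (fun e => if x ∈ e then (1:ℝ) else 0)).sum = 0 := by
  induction p with
  | nil => simp
  | @cons u v c h q ih =>
    rw [SimpleGraph.Walk.support_cons, List.mem_cons] at hx
    push_neg at hx
    simp only [SimpleGraph.Walk.edges_cons, List.map_cons, List.sum_cons]
    rw [if_neg, ih hx.2]
    · ring
    · simp only [Sym2.mem_iff]
      push_neg
      exact ⟨hx.1, fun hxv => hx.2 (hxv ▸ q.start_mem_support)⟩

lemma edge_ind_sum_one {V : Type*} [DecidableEq V] {G : SimpleGraph V} {a b : V}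
    (p : G.Walk a b) (hp : p.IsPath) (hab : a ≠ b) :
    (p.edges.map (fun e => if a ∈ e then (1:ℝ) else 0)).sum = 1 := by
  cases p with
  | nil => exact absurd rfl hab
  | cons h q =>
    rw [SimpleGraph.Walk.cons_isPath_iff] at hp
    simp only [SimpleGraph.Walk.edges_cons, List.map_cons, List.sum_cons]
    rw [if_pos (by simp), edge_ind_sum_zero q hp.2]
    ring

/-- Every exterior link (an edge incident to a monitor) other than the
direct edge m1m2 is unidentifiable. -/
theorem exterior_links_unidentifiable {V : Type*} [Fintype V] [DecidableEq V]
    (G : SimpleGraph V) (m1 m2 : V) (hm : m1 ≠ m2) :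
    ∀ e ∈ G.edgeSet, (m1 ∈ e ∨ m2 ∈ e) → e ≠ s(m1, m2) →
      ¬ Identifiable G m1 m2 e := by
  intro e he hme hne hid
  have hnboth : ¬ (m1 ∈ e ∧ m2 ∈ e) := by
    intro hb
    exact hne ((Sym2.mem_and_mem_iff hm).mp hb)
  have key := hid (fun e' => if m2 ∈ e' then (1:ℝ) else 0)
      (fun e' => if m1 ∈ e' then (1:ℝ) else 0) ?_
  · rcases hme with h1 | h2
    · rw [if_pos h1, if_neg (fun h2 => hnboth ⟨h1, h2⟩)] at key
      exact one_ne_zero key.symm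
    · rw [if_pos h2, if_neg (fun h1 => hnboth ⟨h1, h2⟩)] at key
      exact one_ne_zero key
  · intro p hp
    unfold walkWeight
    have h2 : (p.edges.map (fun e' => if m2 ∈ e' then (1:ℝ) else 0)).sum
        = (p.reverse.edges.map (fun e' => if m2 ∈ e' then (1:ℝ) else 0)).sum := by
      rw [SimpleGraph.Walk.edges_reverse, List.map_reverse, List.sum_reverse]
    rw [h2, edge_ind_sum_one p.reverse hp.reverse hm.symm,
      edge_ind_sum_one p hp hm]
end

section
/- Let G be a finite connected simple graph and M ⊆ V(G) a set of monitors with |M| ≥ 3 such that for every pair of distinct vertices u1, u2 ∈ V(G), every connected component of G − u1 − u2 contains a vertex of M. Then the extended graph G_ex of G is 3-vertex-connected. -/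
open SimpleGraph

/-- If G is connected, there are at least 3 monitors, and for every pair
of distinct vertices u1, u2 every connected component of G − u1 − u2 contains a
monitor, then the extended graph G_ex is 3-vertex-connected. -/
theorem extended_graph_three_connected_of_components_have_monitor
    {V : Type*} [Fintype V] [DecidableEq V]
    (G : SimpleGraph V) (hG : G.Connected) (M : Finset V) (hM : 3 ≤ M.card)
    (h : ∀ u1 u2 : V, u1 ≠ u2 →
      ∀ x : {v // v ≠ u1 ∧ v ≠ u2}, ∃ y : {v // v ≠ u1 ∧ v ≠ u2},
        (y : V) ∈ M ∧ (G.induce {v | v ≠ u1 ∧ v ≠ u2}).Reachable x y) :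
    KVertexConnected (extendedGraph G ↑M) 3 := by
  classical
  have hcardV : 3 ≤ Fintype.card V := le_trans hM (Finset.card_le_univ M)
  set H := extendedGraph G (↑M : Set V) with hH
  -- basic adjacency facts in H
  have hadj_lr : ∀ (y : V) (b : Bool), y ∈ M → H.Adj (Sum.inl y) (Sum.inr b) := by
    intro y b hy
    rw [hH, extendedGraph, fromRel_adj]
    exact ⟨by simp, Or.inl (by simpa using hy)⟩
  have hadj_ll : ∀ u v : V, G.Adj u v → H.Adj (Sum.inl u) (Sum.inl v) := by
    intro u v huv
    rw [hH, extendedGraph, fromRel_adj]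
    exact ⟨by simpa using huv.ne, Or.inl huv⟩
  constructor
  · simp only [Fintype.card_sum, Fintype.card_bool]; omega
  · intro S hS
    have hS2 : S.card ≤ 2 := by omega
    set T : Set (V ⊕ Bool) := (↑(Sᶜ) : Set (V ⊕ Bool)) with hT
    have hmemT : ∀ a, a ∈ T ↔ a ∉ S := by
      intro a; simp [hT]
    -- a monitor outside S
    obtain ⟨y0, hy0M, hy0S⟩ : ∃ y0 ∈ M, Sum.inl y0 ∉ S := by
      by_contra hc
      push_neg at hc
      have hsub : M.image Sum.inl ⊆ S := by
        intro a ha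
        simp only [Finset.mem_image] at ha
        obtain ⟨y, hy, rfl⟩ := ha
        exact hc y hy
      have := Finset.card_le_card hsub
      rw [Finset.card_image_of_injective _ Sum.inl_injective] at this
      omega
    have hy0T : Sum.inl y0 ∈ T := (hmemT _).2 hy0S
    -- everything in T reaches the base monitor y0
    have key : ∀ a : T, (H.induce T).Reachable a ⟨Sum.inl y0, hy0T⟩ := by
      by_cases hb : ∃ b : Bool, Sum.inr b ∉ S
      · -- some virtual monitor survives
        obtain ⟨b, hbS⟩ := hb
        have hbT : Sum.inr b ∈ T := (hmemT _).2 hbS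
        have hreach_b : ∀ (y : V) (hy : Sum.inl y ∈ T), y ∈ M →
            (H.induce T).Reachable ⟨Sum.inl y, hy⟩ ⟨Sum.inr b, hbT⟩ := by
          intro y hy hyM
          exact SimpleGraph.Adj.reachable (by simpa using hadj_lr y b hyM)
        rintro ⟨a, haT⟩
        have hreach_by0 : (H.induce T).Reachable ⟨Sum.inr b, hbT⟩ ⟨Sum.inl y0, hy0T⟩ :=
          (hreach_b y0 hy0T hy0M).symm
        cases a with
        | inr b' =>
          exact SimpleGraph.Adj.reachable
            (by simp only [comap_adj]; exact (hadj_lr y0 b' hy0M).symm)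
        | inl x =>
          -- the deleted real vertices
          have hxS : Sum.inl x ∉ S := (hmemT _).1 haT
          set D : Finset V := Finset.univ.filter (fun v => Sum.inl v ∈ S) with hD
          have hDcard : D.card ≤ 2 := by
            have himg : D.image Sum.inl ⊆ S := by
              intro a ha
              simp only [Finset.mem_image] at ha
              obtain ⟨v, hv, rfl⟩ := ha
              simp only [hD, Finset.mem_filter] at hv
              exact hv.2
            have := Finset.card_le_card himg
            rw [Finset.card_image_of_injective _ Sum.inl_injective] at this
            omega
          have hxD : x ∉ D := by
            simp only [hD, Finset.mem_filter]
            exact fun hx => hxS hx.2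
          have hDsub : D ⊆ Finset.univ.erase x := by
            intro v hv
            exact Finset.mem_erase.2 ⟨fun hvx => hxD (hvx ▸ hv), Finset.mem_univ v⟩
          obtain ⟨U, hDU, hUsub, hUcard⟩ :=
            Finset.exists_subsuperset_card_eq hDsub hDcard
              (by
                rw [Finset.card_erase_of_mem (Finset.mem_univ x), Finset.card_univ]
                omega)
          obtain ⟨u1, u2, hu12, rfl⟩ := Finset.card_eq_two.1 hUcard
          have hxu1 : x ≠ u1 := by
            intro hx
            exact (Finset.mem_erase.1 (hUsub (by simp [hx]))).1 rfl
          have hxu2 : x ≠ u2 := by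
            intro hx
            exact (Finset.mem_erase.1 (hUsub (by simp [hx]))).1 rfl
          obtain ⟨⟨y, hyu1, hyu2⟩, hyM, hreach⟩ := h u1 u2 hu12 ⟨x, hxu1, hxu2⟩
          -- hom from the doubly-punctured graph into the induced extended graph
          have hinT : ∀ v : V, v ≠ u1 → v ≠ u2 → Sum.inl v ∈ T := by
            intro v h1 h2
            rw [hmemT]
            intro hvS
            have hvD : v ∈ D := by simp [hD, hvS]
            have := hDU hvD
            simp only [Finset.mem_insert, Finset.mem_singleton] at this
            rcases this with h' | h' <;> [exact h1 h'; exact h2 h']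
          let φ : (G.induce {v | v ≠ u1 ∧ v ≠ u2}) →g (H.induce T) :=
            { toFun := fun v => ⟨Sum.inl v.1, hinT v.1 v.2.1 v.2.2⟩,
              map_rel' := by
                rintro ⟨a, _⟩ ⟨c, _⟩ hac
                simp only [comap_adj] at hac ⊢
                exact hadj_ll a c hac }
          have hr : (H.induce T).Reachable ⟨Sum.inl x, haT⟩
              ⟨Sum.inl y, hinT y hyu1 hyu2⟩ := hreach.map φ
          exact hr.trans ((hreach_b y (hinT y hyu1 hyu2) hyM).trans hreach_by0)
      · -- both virtual monitors deleted: S = {inr false, inr true}, G itself survives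
        push_neg at hb
        have hallV : ∀ v : V, Sum.inl v ∉ S := by
          intro v hv
          have hsub : ({Sum.inr false, Sum.inr true, Sum.inl v} : Finset (V ⊕ Bool)) ⊆ S := by
            intro a ha
            simp only [Finset.mem_insert, Finset.mem_singleton] at ha
            rcases ha with rfl | rfl | rfl
            · exact hb false
            · exact hb true
            · exact hv
          have := Finset.card_le_card hsub
          rw [Finset.card_insert_of_notMem (by simp),
            Finset.card_insert_of_notMem (by simp)] at this
          simp at this
          omega
        let ψ : G →g (H.induce T) :=
          { toFun := fun v => ⟨Sum.inl v, (hmemT _).2 (hallV v)⟩,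
            map_rel' := by
              intro a c hac
              simp only [comap_adj]
              exact hadj_ll a c hac }
        rintro ⟨a, haT⟩
        cases a with
        | inr b' => exact absurd ((hmemT _).1 haT) (by simpa using hb b')
        | inl x => exact (hG.preconnected x y0).map ψ
    haveI : Nonempty T := ⟨⟨Sum.inl y0, hy0T⟩⟩
    exact SimpleGraph.Connected.mk (fun a c => (key a).trans (key c).symm)
end

section
/- Let G be a finite simple graph with two distinguished vertices m1 ≠ m2 (the monitors), let r and s be two distinct vertices of G, and let C be a connected component of G − r − s such that m1 ∉ V(C) and m2 ∉ V(C). Then every edge of G joining r to a vertex of C and every edge of G joining s to a vertex of C is unidentifiable. -/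
open SimpleGraph
open scoped Classical

noncomputable def crossW {V : Type*} (t : V) (D : Set V) : Sym2 V → ℝ :=
  fun e => if ∃ x ∈ D, e = s(t, x) then (1:ℝ) else 0

lemma crossW_pair {V : Type*} (t a b : V) (D : Set V) :
    crossW t D s(a, b) = if (a = t ∧ b ∈ D) ∨ (b = t ∧ a ∈ D) then 1 else 0 := by
  unfold crossW
  congr 1
  · apply propext
    constructor
    · rintro ⟨x, hx, heq⟩
      rw [Sym2.eq_iff] at heq
      rcases heq with ⟨h1, h2⟩ | ⟨h1, h2⟩
      · exact Or.inl ⟨h1, h2 ▸ hx⟩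
      · exact Or.inr ⟨h2, h1 ▸ hx⟩
    · rintro (⟨h1, h2⟩ | ⟨h1, h2⟩)
      · exact ⟨b, h2, by rw [Sym2.eq_iff]; exact Or.inl ⟨h1, rfl⟩⟩
      · exact ⟨a, h2, by rw [Sym2.eq_iff]; exact Or.inr ⟨rfl, h1⟩⟩

noncomputable def wsum {V : Type*} {G : SimpleGraph V} (t : V) (D : Set V) {a b : V}
    (p : G.Walk a b) : ℝ :=
  (p.edges.map (crossW t D)).sum

@[simp] lemma wsum_nil {V : Type*} {G : SimpleGraph V} (t : V) (D : Set V) {a : V} :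
    wsum t D (SimpleGraph.Walk.nil : G.Walk a a) = 0 := rfl

@[simp] lemma wsum_cons {V : Type*} {G : SimpleGraph V} (t : V) (D : Set V) {a v b : V}
    (h : G.Adj a v) (q : G.Walk v b) :
    wsum t D (SimpleGraph.Walk.cons h q) = crossW t D s(a, v) + wsum t D q := by
  simp [wsum]

lemma master {V : Type*} {G : SimpleGraph V} (D : Set V) (r s : V) (hrs : r ≠ s)
    (hrD : r ∉ D) (hsD : s ∉ D)
    (hcl : ∀ ⦃u v : V⦄, u ∈ D → G.Adj u v → v ≠ r → v ≠ s → v ∈ D) :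
    ∀ {a b : V} (p : G.Walk a b), p.support.Nodup → b ∉ D →
      ((a ∉ D → wsum r D p = wsum s D p) ∧
       (a ∈ D → r ∉ p.support → wsum r D p = 0 ∧ wsum s D p = 1) ∧
       (a ∈ D → s ∉ p.support → wsum s D p = 0 ∧ wsum r D p = 1) ∧
       (a ∈ D → r ∉ p.support → s ∉ p.support → False) ∧
       (a ∉ D → r ∉ p.support → s ∉ p.support → wsum r D p = 0 ∧ wsum s D p = 0) ∧
       (a = s → r ∉ p.support → s ∉ p.support.tail → wsum r D p = 0 ∧ wsum s D p = 0) ∧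
       (a = r → s ∉ p.support → r ∉ p.support.tail → wsum r D p = 0 ∧ wsum s D p = 0)) := by
  intro a b p
  induction p with
  | nil =>
    intro _ hb
    refine ⟨fun _ => rfl, fun ha _ => absurd ha hb, fun ha _ => absurd ha hb,
      fun ha _ _ => hb ha, fun _ _ _ => ⟨rfl, rfl⟩, fun _ _ _ => ⟨rfl, rfl⟩,
      fun _ _ _ => ⟨rfl, rfl⟩⟩
  | @cons a v b h q ih =>
    intro hnd hb
    rw [SimpleGraph.Walk.support_cons, List.nodup_cons] at hnd
    obtain ⟨ha_nq, hndq⟩ := hnd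
    obtain ⟨ih1, ih2, ih3, ih4, ih5, ih6, ih7⟩ := ih hndq hb
    have hmemsupp : ∀ t : V, t ∈ (SimpleGraph.Walk.cons h q).support ↔ t = a ∨ t ∈ q.support := by
      intro t; rw [SimpleGraph.Walk.support_cons, List.mem_cons]
    have htail : (SimpleGraph.Walk.cons h q).support.tail = q.support := by
      rw [SimpleGraph.Walk.support_cons]; rfl
    refine ⟨?_, ?_, ?_, ?_, ?_, ?_, ?_⟩
    · -- P1
      intro ha
      by_cases hv : v ∈ D
      · have haRS : a = r ∨ a = s := by
          by_contra hc; push_neg at hc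
          exact ha (hcl hv h.symm hc.1 hc.2)
        rcases haRS with haeq | haeq
        · have h2 := ih2 hv (haeq ▸ ha_nq)
          have er : crossW r D s(a, v) = 1 := by
            rw [crossW_pair]; exact if_pos (Or.inl ⟨haeq, hv⟩)
          have es : crossW s D s(a, v) = 0 := by
            rw [crossW_pair]; apply if_neg
            rintro (⟨hc1, hc2⟩ | ⟨hc1, hc2⟩)
            exacts [hrs (haeq.symm.trans hc1), ha hc2]
          rw [wsum_cons, wsum_cons, er, es, h2.1, h2.2]; norm_num
        · have h3 := ih3 hv (haeq ▸ ha_nq)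
          have es : crossW s D s(a, v) = 1 := by
            rw [crossW_pair]; exact if_pos (Or.inl ⟨haeq, hv⟩)
          have er : crossW r D s(a, v) = 0 := by
            rw [crossW_pair]; apply if_neg
            rintro (⟨hc1, hc2⟩ | ⟨hc1, hc2⟩)
            exacts [hrs (hc1.symm.trans haeq), ha hc2]
          rw [wsum_cons, wsum_cons, er, es, h3.1, h3.2]; norm_num
      · have er : crossW r D s(a, v) = 0 := by
          rw [crossW_pair]; apply if_neg
          rintro (⟨hc1, hc2⟩ | ⟨hc1, hc2⟩)
          exacts [hv hc2, ha hc2]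
        have es : crossW s D s(a, v) = 0 := by
          rw [crossW_pair]; apply if_neg
          rintro (⟨hc1, hc2⟩ | ⟨hc1, hc2⟩)
          exacts [hv hc2, ha hc2]
        rw [wsum_cons, wsum_cons, er, es, ih1 hv]
    · -- P2
      intro ha hr
      rw [hmemsupp] at hr; push_neg at hr
      by_cases hv : v ∈ D
      · have h2 := ih2 hv hr.2
        have er : crossW r D s(a, v) = 0 := by
          rw [crossW_pair]; apply if_neg
          rintro (⟨hc1, hc2⟩ | ⟨hc1, hc2⟩)
          exacts [hrD (hc1 ▸ ha), hrD (hc1 ▸ hv)]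
        have es : crossW s D s(a, v) = 0 := by
          rw [crossW_pair]; apply if_neg
          rintro (⟨hc1, hc2⟩ | ⟨hc1, hc2⟩)
          exacts [hsD (hc1 ▸ ha), hsD (hc1 ▸ hv)]
        rw [wsum_cons, wsum_cons, er, es, h2.1, h2.2]; norm_num
      · have hvRS : v = r ∨ v = s := by
          by_contra hc; push_neg at hc
          exact hv (hcl ha h hc.1 hc.2)
        rcases hvRS with hveq | hveq
        · exact absurd (hveq ▸ q.start_mem_support) hr.2
        · have hsq : s ∉ q.support.tail := by
            have h' := hndq
            rw [q.support_eq_cons, List.nodup_cons] at h'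
            exact hveq ▸ h'.1
          have h6 := ih6 hveq hr.2 hsq
          have er : crossW r D s(a, v) = 0 := by
            rw [crossW_pair]; apply if_neg
            rintro (⟨hc1, hc2⟩ | ⟨hc1, hc2⟩)
            exacts [hrD (hc1 ▸ ha), hrs (hc1.symm.trans hveq)]
          have es : crossW s D s(a, v) = 1 := by
            rw [crossW_pair]; exact if_pos (Or.inr ⟨hveq, ha⟩)
          rw [wsum_cons, wsum_cons, er, es, h6.1, h6.2]; norm_num
    · -- P3
      intro ha hs
      rw [hmemsupp] at hs; push_neg at hs
      by_cases hv : v ∈ D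
      · have h3 := ih3 hv hs.2
        have er : crossW r D s(a, v) = 0 := by
          rw [crossW_pair]; apply if_neg
          rintro (⟨hc1, hc2⟩ | ⟨hc1, hc2⟩)
          exacts [hrD (hc1 ▸ ha), hrD (hc1 ▸ hv)]
        have es : crossW s D s(a, v) = 0 := by
          rw [crossW_pair]; apply if_neg
          rintro (⟨hc1, hc2⟩ | ⟨hc1, hc2⟩)
          exacts [hsD (hc1 ▸ ha), hsD (hc1 ▸ hv)]
        rw [wsum_cons, wsum_cons, er, es, h3.1, h3.2]; norm_num
      · have hvRS : v = r ∨ v = s := by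
          by_contra hc; push_neg at hc
          exact hv (hcl ha h hc.1 hc.2)
        rcases hvRS with hveq | hveq
        · have hrq : r ∉ q.support.tail := by
            have h' := hndq
            rw [q.support_eq_cons, List.nodup_cons] at h'
            exact hveq ▸ h'.1
          have h7 := ih7 hveq hs.2 hrq
          have es : crossW s D s(a, v) = 0 := by
            rw [crossW_pair]; apply if_neg
            rintro (⟨hc1, hc2⟩ | ⟨hc1, hc2⟩)
            exacts [hsD (hc1 ▸ ha), hrs (hveq.symm.trans hc1)]
          have er : crossW r D s(a, v) = 1 := by
            rw [crossW_pair]; exact if_pos (Or.inr ⟨hveq, ha⟩)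
          rw [wsum_cons, wsum_cons, er, es, h7.1, h7.2]; norm_num
        · exact absurd (hveq ▸ q.start_mem_support) hs.2
    · -- P4
      intro ha hr hs
      rw [hmemsupp] at hr hs; push_neg at hr; push_neg at hs
      by_cases hv : v ∈ D
      · exact ih4 hv hr.2 hs.2
      · have hvRS : v = r ∨ v = s := by
          by_contra hc; push_neg at hc
          exact hv (hcl ha h hc.1 hc.2)
        rcases hvRS with hveq | hveq
        · exact absurd (hveq ▸ q.start_mem_support) hr.2
        · exact absurd (hveq ▸ q.start_mem_support) hs.2
    · -- P5
      intro ha hr hs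
      rw [hmemsupp] at hr hs; push_neg at hr; push_neg at hs
      by_cases hv : v ∈ D
      · have haRS : a = r ∨ a = s := by
          by_contra hc; push_neg at hc
          exact ha (hcl hv h.symm hc.1 hc.2)
        rcases haRS with haeq | haeq
        · exact absurd haeq.symm hr.1
        · exact absurd haeq.symm hs.1
      · have h5 := ih5 hv hr.2 hs.2
        have er : crossW r D s(a, v) = 0 := by
          rw [crossW_pair]; apply if_neg
          rintro (⟨hc1, hc2⟩ | ⟨hc1, hc2⟩)
          exacts [hv hc2, ha hc2]
        have es : crossW s D s(a, v) = 0 := by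
          rw [crossW_pair]; apply if_neg
          rintro (⟨hc1, hc2⟩ | ⟨hc1, hc2⟩)
          exacts [hv hc2, ha hc2]
        rw [wsum_cons, wsum_cons, er, es, h5.1, h5.2]; norm_num
    · -- P6
      intro haeq hr hst
      rw [hmemsupp] at hr; push_neg at hr
      rw [htail] at hst
      by_cases hv : v ∈ D
      · exact absurd (ih4 hv hr.2 hst) (fun hf => hf)
      · have h5 := ih5 hv hr.2 hst
        have er : crossW r D s(a, v) = 0 := by
          rw [crossW_pair]; apply if_neg
          rintro (⟨hc1, hc2⟩ | ⟨hc1, hc2⟩)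
          exacts [hrs (hc1.symm.trans haeq), hsD (haeq ▸ hc2)]
        have es : crossW s D s(a, v) = 0 := by
          rw [crossW_pair]; apply if_neg
          rintro (⟨hc1, hc2⟩ | ⟨hc1, hc2⟩)
          exacts [hv hc2, hsD (haeq ▸ hc2)]
        rw [wsum_cons, wsum_cons, er, es, h5.1, h5.2]; norm_num
    · -- P7
      intro haeq hs hrt
      rw [hmemsupp] at hs; push_neg at hs
      rw [htail] at hrt
      by_cases hv : v ∈ D
      · exact absurd (ih4 hv hrt hs.2) (fun hf => hf)
      · have h5 := ih5 hv hrt hs.2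
        have er : crossW r D s(a, v) = 0 := by
          rw [crossW_pair]; apply if_neg
          rintro (⟨hc1, hc2⟩ | ⟨hc1, hc2⟩)
          exacts [hv hc2, hrD (haeq ▸ hc2)]
        have es : crossW s D s(a, v) = 0 := by
          rw [crossW_pair]; apply if_neg
          rintro (⟨hc1, hc2⟩ | ⟨hc1, hc2⟩)
          exacts [hrs (haeq.symm.trans hc1), hrD (haeq ▸ hc2)]
        rw [wsum_cons, wsum_cons, er, es, h5.1, h5.2]; norm_num

lemma list_sum_map_sub {α : Type*} (l : List α) (f g : α → ℝ) :
    (l.map (fun x => f x - g x)).sum = (l.map f).sum - (l.map g).sum := by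
  induction l with
  | nil => simp
  | cons x xs ih => simp [ih]; ring

/-- If C is a connected component of G − r − s containing neither
monitor, then every edge joining r (or s) to a vertex of C is unidentifiable. -/
theorem edges_into_monitorless_component_unidentifiable
    {V : Type*} [Fintype V] [DecidableEq V]
    (G : SimpleGraph V) (m1 m2 : V) (hm : m1 ≠ m2)
    (r s : V) (hrs : r ≠ s)
    (c : (G.induce {v | v ≠ r ∧ v ≠ s}).ConnectedComponent)
    (hm1 : ∀ u ∈ c.supp, (u : V) ≠ m1)
    (hm2 : ∀ u ∈ c.supp, (u : V) ≠ m2) :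
    ∀ u ∈ c.supp,
      (G.Adj r (u : V) → ¬ Identifiable G m1 m2 s(r, (u : V))) ∧
      (G.Adj s (u : V) → ¬ Identifiable G m1 m2 s(s, (u : V))) := by
  intro u hu
  set D : Set V := {x : V | ∃ hx : x ≠ r ∧ x ≠ s, (⟨x, hx⟩ : {v : V | v ≠ r ∧ v ≠ s}) ∈ c.supp}
    with hD
  have hrD : r ∉ D := fun ⟨hx, _⟩ => hx.1 rfl
  have hsD : s ∉ D := fun ⟨hx, _⟩ => hx.2 rfl
  have hm1D : m1 ∉ D := fun ⟨hx, hmem⟩ => hm1 _ hmem rfl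
  have hm2D : m2 ∉ D := fun ⟨hx, hmem⟩ => hm2 _ hmem rfl
  have hcl : ∀ ⦃x y : V⦄, x ∈ D → G.Adj x y → y ≠ r → y ≠ s → y ∈ D := by
    rintro x y ⟨hx, hmem⟩ hadj hy1 hy2
    refine ⟨⟨hy1, hy2⟩, ?_⟩
    rw [SimpleGraph.ConnectedComponent.mem_supp_iff] at hmem ⊢
    rw [← hmem]
    apply SimpleGraph.ConnectedComponent.sound
    apply SimpleGraph.Adj.reachable
    show (G.induce {v : V | v ≠ r ∧ v ≠ s}).Adj ⟨y, ⟨hy1, hy2⟩⟩ ⟨x, hx⟩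
    exact hadj.symm
  have huD : (u : V) ∈ D := ⟨u.2, by simpa using hu⟩
  have hpaths : ∀ p : G.Walk m1 m2, p.IsPath →
      walkWeight G (fun e => crossW r D e - crossW s D e) p = walkWeight G (fun _ => (0:ℝ)) p := by
    intro p hp
    have hmw : walkWeight G (fun e => crossW r D e - crossW s D e) p
        = wsum r D p - wsum s D p := by
      simpa [walkWeight, wsum] using list_sum_map_sub p.edges (crossW r D) (crossW s D)
    have hmain := (master D r s hrs hrD hsD hcl p hp.support_nodup hm2D).1 hm1D
    rw [hmw, hmain]
    simp [walkWeight]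
  constructor
  · intro hadj hid
    have key := hid (fun e => crossW r D e - crossW s D e) (fun _ => 0) hpaths
    have e1 : crossW r D s(r, (u : V)) = 1 := by
      rw [crossW_pair]; exact if_pos (Or.inl ⟨rfl, huD⟩)
    have e2 : crossW s D s(r, (u : V)) = 0 := by
      rw [crossW_pair]; apply if_neg
      rintro (⟨hc1, hc2⟩ | ⟨hc1, hc2⟩)
      exacts [hrs hc1, hrD hc2]
    simp only [e1, e2] at key
    norm_num at key
  · intro hadj hid
    have key := hid (fun e => crossW r D e - crossW s D e) (fun _ => 0) hpaths
    have e1 : crossW s D s(s, (u : V)) = 1 := by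
      rw [crossW_pair]; exact if_pos (Or.inl ⟨rfl, huD⟩)
    have e2 : crossW r D s(s, (u : V)) = 0 := by
      rw [crossW_pair]; apply if_neg
      rintro (⟨hc1, hc2⟩ | ⟨hc1, hc2⟩)
      exacts [hrs hc1.symm, hsD hc2]
    simp only [e1, e2] at key
    norm_num at key
end
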